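/- arXiv:1905.12074 — 4 statements merged into one kernel-verified Lean document; each statement's English description precedes it below -/
import Mathlib

section
/- Let r ∈ ℕ, r ≥ 1, and let χ satisfy M_r(χ) < ∞ and the moment condition of order r with constant c. Then for every w > 0, S_w maps algebraic polynomials of total degree at most r−1 into algebraic polynomials of the same degree: for every bivariate polynomial P with deg P ≤ r−1 there exists a bivariate polynomial Q with deg Q = deg P such that (S_w P)(x,y) = Q(x,y) for all (x,y) ∈ ℝ². -/
open MeasureTheory Filter
open scoped ENNReal BigOperators Topology

noncomputable def absMoment (χ : ℝ × ℝ → ℝ) (p₁ p₂ : ℕ) : ℝ≥0∞ :=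
  ⨆ u : ℝ, ⨆ v : ℝ, ∑' k : ℤ, ∑' j : ℤ,
    ENNReal.ofReal (|χ (u - (k : ℝ), v - (j : ℝ))| * |u - (k : ℝ)| ^ p₁ * |v - (j : ℝ)| ^ p₂)

noncomputable def Mmoment (χ : ℝ × ℝ → ℝ) (η : ℕ) : ℝ≥0∞ :=
  ⨆ p : {p : ℕ × ℕ // p.1 + p.2 = η}, absMoment χ p.1.1 p.1.2

def PartitionOfUnity2 (χ : ℝ × ℝ → ℝ) : Prop :=
  ∀ u v : ℝ, ∑' k : ℤ, ∑' j : ℤ, χ (u - (k : ℝ), v - (j : ℝ)) = 1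

def MomentCondition (χ : ℝ × ℝ → ℝ) (r : ℕ) (c : ℝ) : Prop :=
  (∀ u v : ℝ, ∀ p₁ p₂ : ℕ, 1 ≤ p₁ + p₂ → p₁ + p₂ ≤ r - 1 →
    ∑' k : ℤ, ∑' j : ℤ, χ (u - (k : ℝ), v - (j : ℝ)) * (u - (k : ℝ)) ^ p₁ * (v - (j : ℝ)) ^ p₂ = 0) ∧
  (∀ u v : ℝ, ∀ p₁ p₂ : ℕ, p₁ + p₂ = r →
    ∑' k : ℤ, ∑' j : ℤ, χ (u - (k : ℝ), v - (j : ℝ)) * (u - (k : ℝ)) ^ p₁ * (v - (j : ℝ)) ^ p₂ = c)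

noncomputable def Gop (χ : ℝ × ℝ → ℝ) (w : ℝ) (f : ℝ × ℝ → ℝ) (x y : ℝ) : ℝ :=
  ∑' k : ℤ, ∑' j : ℤ, χ (w * x - (k : ℝ), w * y - (j : ℝ)) * f ((k : ℝ) / w, (j : ℝ) / w)

noncomputable def Sop (χ : ℝ × ℝ → ℝ) (w : ℝ) (f : ℝ × ℝ → ℝ) (x y : ℝ) : ℝ :=
  ∑' k : ℤ, ∑' j : ℤ, χ (w * x - (k : ℝ), w * y - (j : ℝ)) *
    (w ^ 2 * ∫ u in ((k : ℝ) / w)..(((k : ℝ) + 1) / w),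
      ∫ v in ((j : ℝ) / w)..(((j : ℝ) + 1) / w), f (u, v))

noncomputable def pX (f : ℝ × ℝ → ℝ) : ℝ × ℝ → ℝ := fun p => deriv (fun t => f (t, p.2)) p.1
noncomputable def pY (f : ℝ × ℝ → ℝ) : ℝ × ℝ → ℝ := fun p => deriv (fun t => f (p.1, t)) p.2
noncomputable def pd (f : ℝ × ℝ → ℝ) (i j : ℕ) : ℝ × ℝ → ℝ := pX^[i] (pY^[j] f)

noncomputable def supNorm (g : ℝ × ℝ → ℝ) : ℝ := ⨆ p : ℝ × ℝ, |g p|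

def mixedDiff (f : ℝ × ℝ → ℝ) (u v x y : ℝ) : ℝ := f (x, y) - f (x, v) - f (u, y) + f (u, v)

def BContinuous (f : ℝ × ℝ → ℝ) : Prop :=
  ∀ x₀ y₀ : ℝ, Tendsto (fun p : ℝ × ℝ => mixedDiff f x₀ y₀ p.1 p.2) (nhds (x₀, y₀)) (nhds 0)

noncomputable def omegaB (f : ℝ × ℝ → ℝ) (δ₁ δ₂ : ℝ) : ℝ :=
  sSup {t : ℝ | ∃ x y u v : ℝ, |x - u| < δ₁ ∧ |y - v| < δ₂ ∧ t = |mixedDiff f u v x y|}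

noncomputable def Kop (χ : ℝ × ℝ → ℝ) (w : ℝ) (f : ℝ × ℝ → ℝ) (x y : ℝ) : ℝ :=
  Sop χ w (fun p => f (p.1, y) + f (x, p.2) - f (p.1, p.2)) x y

section AuxStatement5

open MvPolynomial intervalIntegral

lemma summable_of_absMoment (χ : ℝ × ℝ → ℝ) (p₁ p₂ : ℕ) (h : absMoment χ p₁ p₂ < ⊤) (u v : ℝ) :
    Summable (fun kj : ℤ × ℤ =>
      |χ (u - (kj.1 : ℝ), v - (kj.2 : ℝ))| * |u - (kj.1 : ℝ)| ^ p₁ * |v - (kj.2 : ℝ)| ^ p₂) := by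
  set g : ℤ × ℤ → ℝ := fun kj =>
    |χ (u - (kj.1 : ℝ), v - (kj.2 : ℝ))| * |u - (kj.1 : ℝ)| ^ p₁ * |v - (kj.2 : ℝ)| ^ p₂ with hg
  have hg0 : ∀ kj, 0 ≤ g kj := by
    intro kj; positivity
  have hne : ∑' kj : ℤ × ℤ, ENNReal.ofReal (g kj) ≠ ⊤ := by
    rw [ENNReal.tsum_prod']
    have h1 : (∑' k : ℤ, ∑' j : ℤ, ENNReal.ofReal (g (k, j))) ≤ absMoment χ p₁ p₂ := by
      refine le_trans ?_ (le_iSup _ u)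
      exact le_trans (le_of_eq rfl) (le_iSup (fun v : ℝ => ∑' k : ℤ, ∑' j : ℤ,
        ENNReal.ofReal (|χ (u - (k : ℝ), v - (j : ℝ))| * |u - (k : ℝ)| ^ p₁ * |v - (j : ℝ)| ^ p₂)) v)
    exact ne_top_of_le_ne_top h.ne h1
  have := ENNReal.summable_toReal hne
  refine this.congr fun kj => ?_
  rw [ENNReal.toReal_ofReal (hg0 kj)]

lemma summable_near (u v C : ℝ) :
    Summable (fun kj : ℤ × ℤ =>
      if |u - (kj.1 : ℝ)| ≤ 1 ∧ |v - (kj.2 : ℝ)| ≤ 1 then C else 0) := by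
  apply summable_of_ne_finset_zero (s := (Finset.Icc ⌈u - 1⌉ ⌊u + 1⌋) ×ˢ (Finset.Icc ⌈v - 1⌉ ⌊v + 1⌋))
  intro kj hkj
  rw [if_neg]
  intro ⟨h1, h2⟩
  apply hkj
  rw [Finset.mem_product, Finset.mem_Icc, Finset.mem_Icc]
  rw [abs_le] at h1 h2
  constructor
  · constructor
    · exact Int.ceil_le.2 (by linarith [h1.2])
    · exact Int.le_floor.2 (by linarith [h1.1])
  · constructor
    · exact Int.ceil_le.2 (by linarith [h2.2])
    · exact Int.le_floor.2 (by linarith [h2.1])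

lemma pow_mul_pow_le (x y : ℝ) (hx : 0 ≤ x) (hy : 0 ≤ y) (p q r : ℕ) (hpq : p + q ≤ r) :
    x ^ p * y ^ q ≤ 1 + x ^ r + y ^ r := by
  set M := max 1 (max x y) with hM
  have h1M : 1 ≤ M := le_max_left _ _
  have hxM : x ≤ M := le_trans (le_max_left x y) (le_max_right _ _)
  have hyM : y ≤ M := le_trans (le_max_right x y) (le_max_right _ _)
  have h0M : (0:ℝ) ≤ M := le_trans zero_le_one h1M
  have step1 : x ^ p * y ^ q ≤ M ^ (p + q) := by
    rw [pow_add]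
    exact mul_le_mul (pow_le_pow_left₀ hx hxM p) (pow_le_pow_left₀ hy hyM q) (by positivity)
      (by positivity)
  have step2 : M ^ (p + q) ≤ M ^ r := pow_le_pow_right₀ h1M hpq
  have step3 : M ^ r ≤ 1 + x ^ r + y ^ r := by
    rcases max_choice 1 (max x y) with h | h <;> rw [hM, h]
    · have := pow_nonneg hx r; have := pow_nonneg hy r; simp only [one_pow]; linarith
    · rcases max_choice x y with h' | h' <;> rw [h']
      · nlinarith [pow_nonneg hx r, pow_nonneg hy r]
      · nlinarith [pow_nonneg hx r, pow_nonneg hy r]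
  linarith

lemma absMoment_lt_top (χ : ℝ × ℝ → ℝ) (r : ℕ) (hMr : Mmoment χ r < ⊤) (p₁ p₂ : ℕ)
    (h : p₁ + p₂ = r) : absMoment χ p₁ p₂ < ⊤ :=
  lt_of_le_of_lt (le_iSup (fun p : {p : ℕ × ℕ // p.1 + p.2 = r} => absMoment χ p.1.1 p.1.2)
    ⟨(p₁, p₂), h⟩) hMr

lemma summable_F (χ : ℝ × ℝ → ℝ) (hb : ∃ C : ℝ, ∀ p, |χ p| ≤ C) (r : ℕ) (hMr : Mmoment χ r < ⊤)
    (u v : ℝ) (p q : ℕ) (hpq : p + q ≤ r) :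
    Summable (fun kj : ℤ × ℤ =>
      χ (u - (kj.1 : ℝ), v - (kj.2 : ℝ)) * (u - (kj.1 : ℝ)) ^ p * (v - (kj.2 : ℝ)) ^ q) := by
  obtain ⟨C, hC⟩ := hb
  have sA : Summable (fun kj : ℤ × ℤ =>
      |χ (u - (kj.1 : ℝ), v - (kj.2 : ℝ))| * |u - (kj.1 : ℝ)| ^ r) := by
    have := summable_of_absMoment χ r 0 (absMoment_lt_top χ r hMr r 0 (by omega)) u v
    exact this.congr fun kj => by simp
  have sB : Summable (fun kj : ℤ × ℤ =>
      |χ (u - (kj.1 : ℝ), v - (kj.2 : ℝ))| * |v - (kj.2 : ℝ)| ^ r) := by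
    have := summable_of_absMoment χ 0 r (absMoment_lt_top χ r hMr 0 r (by omega)) u v
    exact this.congr fun kj => by simp
  have s1 : Summable (fun kj : ℤ × ℤ => |χ (u - (kj.1 : ℝ), v - (kj.2 : ℝ))|) := by
    refine Summable.of_nonneg_of_le (fun kj => abs_nonneg _) (fun kj => ?_)
      (((summable_near u v C).add sA).add sB)
    by_cases hcase : |u - (kj.1 : ℝ)| ≤ 1 ∧ |v - (kj.2 : ℝ)| ≤ 1
    · rw [if_pos hcase]
      have h1 : |χ (u - (kj.1 : ℝ), v - (kj.2 : ℝ))| ≤ C := hC _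
      have h2 : (0:ℝ) ≤ |χ (u - (kj.1 : ℝ), v - (kj.2 : ℝ))| * |u - (kj.1 : ℝ)| ^ r := by positivity
      have h3 : (0:ℝ) ≤ |χ (u - (kj.1 : ℝ), v - (kj.2 : ℝ))| * |v - (kj.2 : ℝ)| ^ r := by positivity
      linarith
    · rw [if_neg hcase]
      push_neg at hcase
      have habs : (0:ℝ) ≤ |χ (u - (kj.1 : ℝ), v - (kj.2 : ℝ))| := abs_nonneg _
      by_cases h1 : |u - (kj.1 : ℝ)| ≤ 1
      · have h2 : 1 < |v - (kj.2 : ℝ)| := hcase h1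
        have : (1:ℝ) ≤ |v - (kj.2 : ℝ)| ^ r := one_le_pow₀ (le_of_lt h2)
        nlinarith [mul_nonneg habs (pow_nonneg (abs_nonneg (u - (kj.1:ℝ))) r)]
      · push_neg at h1
        have : (1:ℝ) ≤ |u - (kj.1 : ℝ)| ^ r := one_le_pow₀ (le_of_lt h1)
        nlinarith [mul_nonneg habs (pow_nonneg (abs_nonneg (v - (kj.2:ℝ))) r)]
  apply Summable.of_abs
  refine Summable.of_nonneg_of_le (fun kj => abs_nonneg _) (fun kj => ?_) ((s1.add sA).add sB)
  rw [abs_mul, abs_mul, abs_pow, abs_pow]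
  have := pow_mul_pow_le |u - (kj.1 : ℝ)| |v - (kj.2 : ℝ)| (abs_nonneg _) (abs_nonneg _) p q r hpq
  have habs : (0:ℝ) ≤ |χ (u - (kj.1 : ℝ), v - (kj.2 : ℝ))| := abs_nonneg _
  calc |χ (u - (kj.1 : ℝ), v - (kj.2 : ℝ))| * |u - (kj.1 : ℝ)| ^ p * |v - (kj.2 : ℝ)| ^ q
      = |χ (u - (kj.1 : ℝ), v - (kj.2 : ℝ))| * (|u - (kj.1 : ℝ)| ^ p * |v - (kj.2 : ℝ)| ^ q) := by
        ring
    _ ≤ |χ (u - (kj.1 : ℝ), v - (kj.2 : ℝ))| * (1 + |u - (kj.1 : ℝ)| ^ r + |v - (kj.2 : ℝ)| ^ r) :=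
        mul_le_mul_of_nonneg_left this habs
    _ = _ := by ring

lemma tsum_delta (χ : ℝ × ℝ → ℝ) (hb : ∃ C : ℝ, ∀ p, |χ p| ≤ C) (hpart : PartitionOfUnity2 χ)
    (r : ℕ) (c : ℝ) (hMr : Mmoment χ r < ⊤) (hmom : MomentCondition χ r c)
    (u v : ℝ) (p q : ℕ) (hpq : p + q ≤ r - 1) :
    ∑' kj : ℤ × ℤ, χ (u - (kj.1 : ℝ), v - (kj.2 : ℝ)) * (u - (kj.1 : ℝ)) ^ p * (v - (kj.2 : ℝ)) ^ q
      = if p = 0 ∧ q = 0 then 1 else 0 := by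
  have hs := summable_F χ hb r hMr u v p q (le_trans hpq (Nat.sub_le r 1))
  rw [Summable.tsum_prod' hs (fun b => hs.prod_factor b)]
  by_cases hc : p = 0 ∧ q = 0
  · obtain ⟨hp, hq⟩ := hc
    subst hp; subst hq
    rw [if_pos ⟨rfl, rfl⟩]
    simp only [pow_zero, mul_one]
    exact hpart u v
  · rw [if_neg hc]
    exact hmom.1 u v p q (by omega) hpq

lemma eval_expand (h : MvPolynomial (Fin 2) ℝ) (w u v : ℝ) (hw : w ≠ 0) (k j : ℤ) (χval : ℝ) :
    χval * MvPolynomial.eval ![(k:ℝ)/w, (j:ℝ)/w] h =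
    ∑ m ∈ h.support, ∑ i ∈ Finset.range (m 0 + 1), ∑ l ∈ Finset.range (m 1 + 1),
      (MvPolynomial.coeff m h * ((u/w)^i * (-w⁻¹)^(m 0 - i) * ((m 0).choose i : ℝ))
        * ((v/w)^l * (-w⁻¹)^(m 1 - l) * ((m 1).choose l : ℝ)))
      * (χval * (u - (k:ℝ))^(m 0 - i) * (v - (j:ℝ))^(m 1 - l)) := by
  rw [MvPolynomial.eval_eq']
  have hk : ((k:ℝ))/w = u/w + (-w⁻¹) * (u - (k:ℝ)) := by field_simp; ring
  have hj : ((j:ℝ))/w = v/w + (-w⁻¹) * (v - (j:ℝ)) := by field_simp; ring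
  rw [hk, hj]
  simp only [Fin.prod_univ_two, Matrix.cons_val_zero, Matrix.cons_val_one, Matrix.head_cons,
    add_pow, Finset.mul_sum, Finset.sum_mul]
  refine Finset.sum_congr rfl fun m hm => ?_
  rw [Finset.sum_comm]
  refine Finset.sum_congr rfl fun i hi => ?_
  refine Finset.sum_congr rfl fun l hl => ?_
  rw [mul_pow, mul_pow]
  ring

lemma repro (χ : ℝ × ℝ → ℝ) (hb : ∃ C : ℝ, ∀ p, |χ p| ≤ C) (hpart : PartitionOfUnity2 χ)
    (r : ℕ) (hr : 1 ≤ r) (c : ℝ) (hMr : Mmoment χ r < ⊤) (hmom : MomentCondition χ r c)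
    (h : MvPolynomial (Fin 2) ℝ) (hd : h.totalDegree ≤ r - 1) (w : ℝ) (hw : w ≠ 0) (u v : ℝ) :
    Summable (fun kj : ℤ × ℤ =>
      χ (u - (kj.1 : ℝ), v - (kj.2 : ℝ)) * MvPolynomial.eval ![(kj.1:ℝ)/w, (kj.2:ℝ)/w] h) ∧
    ∑' kj : ℤ × ℤ, χ (u - (kj.1 : ℝ), v - (kj.2 : ℝ)) *
        MvPolynomial.eval ![(kj.1:ℝ)/w, (kj.2:ℝ)/w] h
      = MvPolynomial.eval ![u/w, v/w] h := by
  have hdeg : ∀ m ∈ h.support, m 0 + m 1 ≤ r - 1 := by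
    intro m hm
    have := MvPolynomial.le_totalDegree hm
    rw [Finsupp.sum_fintype _ _ (fun _ => rfl), Fin.sum_univ_two] at this
    omega
  set cst : (Fin 2 →₀ ℕ) → ℕ → ℕ → ℝ := fun m i l =>
    MvPolynomial.coeff m h * ((u/w)^i * (-w⁻¹)^(m 0 - i) * ((m 0).choose i : ℝ))
      * ((v/w)^l * (-w⁻¹)^(m 1 - l) * ((m 1).choose l : ℝ)) with hcst
  have hsumT : ∀ m ∈ h.support, ∀ i l : ℕ, Summable (fun kj : ℤ × ℤ =>
      cst m i l * (χ (u - (kj.1 : ℝ), v - (kj.2 : ℝ)) * (u - (kj.1 : ℝ)) ^ (m 0 - i)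
        * (v - (kj.2 : ℝ)) ^ (m 1 - l))) := by
    intro m hm i l
    exact (summable_F χ hb r hMr u v (m 0 - i) (m 1 - l)
      (by have := hdeg m hm; omega)).mul_left _
  have hfun : (fun kj : ℤ × ℤ =>
      χ (u - (kj.1 : ℝ), v - (kj.2 : ℝ)) * MvPolynomial.eval ![(kj.1:ℝ)/w, (kj.2:ℝ)/w] h)
      = fun kj : ℤ × ℤ => ∑ m ∈ h.support, ∑ i ∈ Finset.range (m 0 + 1),
          ∑ l ∈ Finset.range (m 1 + 1),
          cst m i l * (χ (u - (kj.1 : ℝ), v - (kj.2 : ℝ)) * (u - (kj.1 : ℝ)) ^ (m 0 - i)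
            * (v - (kj.2 : ℝ)) ^ (m 1 - l)) := by
    funext kj
    simpa [hcst, mul_assoc] using eval_expand h w u v hw kj.1 kj.2
      (χ (u - (kj.1 : ℝ), v - (kj.2 : ℝ)))
  constructor
  · rw [hfun]
    refine summable_sum fun m hm => summable_sum fun i _ => summable_sum fun l _ => hsumT m hm i l
  · rw [hfun, Summable.tsum_finsetSum (fun m hm => summable_sum fun i _ => summable_sum fun l _ => hsumT m hm i l)]
    have step : ∀ m ∈ h.support,
        (∑' kj : ℤ × ℤ, ∑ i ∈ Finset.range (m 0 + 1), ∑ l ∈ Finset.range (m 1 + 1),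
          cst m i l * (χ (u - (kj.1 : ℝ), v - (kj.2 : ℝ)) * (u - (kj.1 : ℝ)) ^ (m 0 - i)
            * (v - (kj.2 : ℝ)) ^ (m 1 - l)))
        = MvPolynomial.coeff m h * ((u/w) ^ (m 0) * (v/w) ^ (m 1)) := by
      intro m hm
      rw [Summable.tsum_finsetSum (fun i _ => summable_sum fun l _ => hsumT m hm i l)]
      have inner : ∀ i ∈ Finset.range (m 0 + 1),
          (∑' kj : ℤ × ℤ, ∑ l ∈ Finset.range (m 1 + 1),
            cst m i l * (χ (u - (kj.1 : ℝ), v - (kj.2 : ℝ)) * (u - (kj.1 : ℝ)) ^ (m 0 - i)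
              * (v - (kj.2 : ℝ)) ^ (m 1 - l)))
          = ∑ l ∈ Finset.range (m 1 + 1),
              cst m i l * (if m 0 - i = 0 ∧ m 1 - l = 0 then 1 else 0) := by
        intro i _
        rw [Summable.tsum_finsetSum (fun l _ => hsumT m hm i l)]
        refine Finset.sum_congr rfl fun l _ => ?_
        rw [tsum_mul_left]
        congr 1
        exact tsum_delta χ hb hpart r c hMr hmom u v (m 0 - i) (m 1 - l)
          (by have := hdeg m hm; omega)
      rw [Finset.sum_congr rfl inner]
      rw [Finset.sum_eq_single (m 0)]
      · rw [Finset.sum_eq_single (m 1)]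
        · rw [if_pos ⟨Nat.sub_self _, Nat.sub_self _⟩]
          simp [hcst, Nat.sub_self, mul_assoc]
        · intro l hl hne
          rw [Finset.mem_range] at hl
          rw [if_neg, mul_zero]
          rintro ⟨-, h2⟩
          exact hne (by omega)
        · intro hnot
          exact absurd (Finset.self_mem_range_succ (m 1)) hnot
      · intro i hi hne
        apply Finset.sum_eq_zero
        intro l _
        rw [if_neg, mul_zero]
        rintro ⟨h1, -⟩
        rw [Finset.mem_range] at hi
        exact hne (by omega)
      · intro hnot
        exact absurd (Finset.self_mem_range_succ (m 0)) hnot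
    rw [Finset.sum_congr rfl step, MvPolynomial.eval_eq']
    refine Finset.sum_congr rfl fun m hm => ?_
    simp [Fin.prod_univ_two]

noncomputable def Ipoly (w : ℝ) (s : Fin 2) (n : ℕ) : MvPolynomial (Fin 2) ℝ :=
  C (w/(n+1)) * ((X s + C w⁻¹)^(n+1) - (X s)^(n+1))

noncomputable def Epoly (w : ℝ) (s : Fin 2) (n : ℕ) : MvPolynomial (Fin 2) ℝ :=
  ∑ i ∈ Finset.range n, C (w/(n+1) * w⁻¹^(n+1-i) * ((n+1).choose i : ℝ)) * X s ^ i

noncomputable def Qavg (w : ℝ) (P : MvPolynomial (Fin 2) ℝ) : MvPolynomial (Fin 2) ℝ :=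
  ∑ m ∈ P.support, coeff m P • (Ipoly w 0 (m 0) * Ipoly w 1 (m 1))

lemma Ipoly_eq (w : ℝ) (hw : w ≠ 0) (s : Fin 2) (n : ℕ) :
    Ipoly w s n = X s ^ n + Epoly w s n := by
  have hn : ((n:ℝ) + 1) ≠ 0 := by positivity
  rw [Ipoly, add_pow, Finset.sum_range_succ, Finset.sum_range_succ]
  simp only [Nat.sub_self, pow_zero, Nat.choose_self, Nat.cast_one, map_one, mul_one,
    Nat.choose_succ_self_right, Nat.succ_sub_one]
  rw [Epoly, add_sub_cancel_right, mul_add, Finset.mul_sum]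
  have key : C (R := ℝ) (σ := Fin 2) (w/(n+1)) * (X s ^ n * C w⁻¹ ^ (n + 1 - n)
      * ((n+1 : ℕ) : MvPolynomial (Fin 2) ℝ)) = X s ^ n := by
    have hc : (((n+1:ℕ)):MvPolynomial (Fin 2) ℝ) = C ((n:ℝ)+1) := by
      rw [← C_eq_coe_nat]; push_cast; ring_nf
    have h1 : w / (↑n + 1) * w⁻¹ * (↑n + 1) = 1 := by field_simp
    rw [hc, Nat.add_sub_cancel_left, pow_one,
      show C (R:=ℝ) (σ:=Fin 2) (w/(n+1)) * (X s ^ n * C w⁻¹ * C ((n:ℝ)+1))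
        = C (w/(n+1) * w⁻¹ * ((n:ℝ)+1)) * X s ^ n from by rw [C_mul, C_mul]; ring,
      h1, C_1, one_mul]
  rw [key, add_comm]
  congr 1
  refine Finset.sum_congr rfl fun x hx => ?_
  rw [C_mul, C_mul, C_pow, ← C_eq_coe_nat]
  ring

lemma Epoly_deg (w : ℝ) (s : Fin 2) (n : ℕ) : (Epoly w s n).totalDegree ≤ n - 1 := by
  refine le_trans (totalDegree_finset_sum _ _) (Finset.sup_le fun i hi => ?_)
  rw [Finset.mem_range] at hi
  refine le_trans (totalDegree_mul _ _) ?_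
  rw [totalDegree_C, zero_add]
  exact le_trans (totalDegree_pow _ _) (by rw [totalDegree_X]; omega)

lemma Epoly_zero (w : ℝ) (s : Fin 2) : Epoly w s 0 = 0 := by
  rw [Epoly, Finset.range_zero, Finset.sum_empty]

lemma eval_Ipoly (w : ℝ) (s : Fin 2) (n : ℕ) (g : Fin 2 → ℝ) :
    eval g (Ipoly w s n) = w/(n+1) * ((g s + w⁻¹)^(n+1) - (g s)^(n+1)) := by
  simp [Ipoly]

lemma monomial_eq_smul (m : Fin 2 →₀ ℕ) (a : ℝ) :
    (monomial m a : MvPolynomial (Fin 2) ℝ) = a • (X 0 ^ (m 0) * X 1 ^ (m 1)) := by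
  rw [monomial_eq, smul_eq_C_mul]
  congr 1
  rw [Finsupp.prod_fintype _ _ (fun _ => pow_zero _), Fin.prod_univ_two]

lemma Qavg_eq_add (w : ℝ) (hw : w ≠ 0) (P : MvPolynomial (Fin 2) ℝ) :
    Qavg w P = P + ∑ m ∈ P.support, coeff m P •
      (X 0 ^ (m 0) * Epoly w 1 (m 1) + Epoly w 0 (m 0) * X 1 ^ (m 1)
        + Epoly w 0 (m 0) * Epoly w 1 (m 1)) := by
  have key : Qavg w P = ∑ m ∈ P.support, ((monomial m (coeff m P) : MvPolynomial (Fin 2) ℝ)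
      + coeff m P • (X 0 ^ (m 0) * Epoly w 1 (m 1) + Epoly w 0 (m 0) * X 1 ^ (m 1)
        + Epoly w 0 (m 0) * Epoly w 1 (m 1))) := by
    rw [Qavg]
    refine Finset.sum_congr rfl fun m hm => ?_
    rw [monomial_eq_smul, ← smul_add]
    congr 1
    rw [Ipoly_eq w hw, Ipoly_eq w hw]
    ring
  rw [key, Finset.sum_add_distrib, support_sum_monomial_coeff]

lemma degsum_eq (m : Fin 2 →₀ ℕ) : (m.sum fun _ e => e) = m 0 + m 1 := by
  rw [Finsupp.sum_fintype _ _ (fun _ => rfl), Fin.sum_univ_two]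

lemma Qavg_totalDegree (w : ℝ) (hw : w ≠ 0) (P : MvPolynomial (Fin 2) ℝ) :
    (Qavg w P).totalDegree = P.totalDegree := by
  by_cases h0 : P = 0
  · simp [Qavg, h0]
  set D := P.totalDegree with hD
  set R := ∑ m ∈ P.support, coeff m P •
      (X 0 ^ (m 0) * Epoly w 1 (m 1) + Epoly w 0 (m 0) * X 1 ^ (m 1)
        + Epoly w 0 (m 0) * Epoly w 1 (m 1)) with hR
  have hQ : Qavg w P = P + R := Qavg_eq_add w hw P
  have hdegm : ∀ m ∈ P.support, m 0 + m 1 ≤ D := by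
    intro m hm
    have := le_totalDegree hm
    rwa [degsum_eq] at this
  by_cases hD0 : D = 0
  · have hRz : R = 0 := by
      rw [hR]
      refine Finset.sum_eq_zero fun m hm => ?_
      have h01 : m 0 = 0 ∧ m 1 = 0 := by have := hdegm m hm; omega
      rw [show m 1 = 0 from h01.2, show m 0 = 0 from h01.1, Epoly_zero, Epoly_zero]
      simp
    rw [hQ, hRz, add_zero]
  have hRdeg : R.totalDegree ≤ D - 1 := by
    rw [hR]
    refine le_trans (totalDegree_finset_sum _ _) (Finset.sup_le fun m hm => ?_)
    refine le_trans (totalDegree_smul_le _ _) ?_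
    have hdm := hdegm m hm
    refine le_trans (totalDegree_add _ _)
      (max_le (le_trans (totalDegree_add _ _) (max_le ?_ ?_)) ?_)
    · by_cases h1 : m 1 = 0
      · rw [h1, Epoly_zero, mul_zero, totalDegree_zero]; omega
      · refine le_trans (totalDegree_mul _ _) ?_
        have e1 := Epoly_deg w 1 (m 1)
        have e2 : (X (R := ℝ) 0 ^ (m 0) : MvPolynomial (Fin 2) ℝ).totalDegree ≤ m 0 :=
          le_trans (totalDegree_pow _ _) (by rw [totalDegree_X, mul_one])
        omega
    · by_cases h1 : m 0 = 0
      · rw [h1, Epoly_zero, zero_mul, totalDegree_zero]; omega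
      · refine le_trans (totalDegree_mul _ _) ?_
        have e1 := Epoly_deg w 0 (m 0)
        have e2 : (X (R := ℝ) 1 ^ (m 1) : MvPolynomial (Fin 2) ℝ).totalDegree ≤ m 1 :=
          le_trans (totalDegree_pow _ _) (by rw [totalDegree_X, mul_one])
        omega
    · by_cases h1 : m 0 = 0
      · rw [h1, Epoly_zero, zero_mul, totalDegree_zero]; omega
      · by_cases h2 : m 1 = 0
        · rw [h2, Epoly_zero, mul_zero, totalDegree_zero]; omega
        · refine le_trans (totalDegree_mul _ _) ?_
          have e1 := Epoly_deg w 0 (m 0)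
          have e2 := Epoly_deg w 1 (m 1)
          omega
  refine le_antisymm ?_ ?_
  · rw [hQ]
    refine le_trans (totalDegree_add _ _) (max_le le_rfl ?_)
    omega
  · obtain ⟨m, hm, hms⟩ := Finset.exists_mem_eq_sup P.support
      (MvPolynomial.support_nonempty.mpr h0) (fun s : Fin 2 →₀ ℕ => s.sum fun _ e => e)
    have hmD : (m.sum fun _ e => e) = D := by rw [hD, MvPolynomial.totalDegree, hms]
    have hcR : coeff m R = 0 := by
      apply coeff_eq_zero_of_totalDegree_lt
      have : (∑ i ∈ m.support, m i) = (m.sum fun _ e => e) := rfl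
      rw [this, hmD]
      omega
    have hcQ : coeff m (Qavg w P) ≠ 0 := by
      rw [hQ, coeff_add, hcR, add_zero]
      exact mem_support_iff.mp hm
    have := le_totalDegree (p := Qavg w P) (mem_support_iff.mpr hcQ)
    omega

lemma inner_integral (P : MvPolynomial (Fin 2) ℝ) (b c : ℝ) (u : ℝ) :
    ∫ v in b..c, eval ![u, v] P
      = ∑ m ∈ P.support, coeff m P * u ^ (m 0) * ((c ^ (m 1 + 1) - b ^ (m 1 + 1)) / (m 1 + 1)) := by
  have hintg : ∀ m ∈ P.support, IntervalIntegrable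
      (fun v => coeff m P * u ^ (m 0) * v ^ (m 1)) MeasureTheory.volume b c :=
    fun m _ => Continuous.intervalIntegrable (by continuity) b c
  have : (fun v => eval ![u, v] P)
      = fun v => ∑ m ∈ P.support, coeff m P * u ^ (m 0) * v ^ (m 1) := by
    funext v
    rw [eval_eq']
    exact Finset.sum_congr rfl fun m _ => by
      rw [Fin.prod_univ_two]
      simp [mul_assoc]
  rw [intervalIntegral.integral_congr (fun v _ => congrFun this v),
    intervalIntegral.integral_finset_sum hintg]
  refine Finset.sum_congr rfl fun m _ => ?_
  rw [intervalIntegral.integral_const_mul, integral_pow]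

lemma double_integral (P : MvPolynomial (Fin 2) ℝ) (w : ℝ) (hw : 0 < w) (a b : ℝ) :
    w^2 * ∫ u in a..(a + w⁻¹), ∫ v in b..(b + w⁻¹), eval ![u, v] P
      = eval ![a, b] (Qavg w P) := by
  have hw' : w ≠ 0 := ne_of_gt hw
  have houter : ∫ u in a..(a + w⁻¹), ∫ v in b..(b + w⁻¹), eval ![u, v] P
      = ∑ m ∈ P.support, coeff m P
          * (((a + w⁻¹) ^ (m 0 + 1) - a ^ (m 0 + 1)) / (m 0 + 1))
          * (((b + w⁻¹) ^ (m 1 + 1) - b ^ (m 1 + 1)) / (m 1 + 1)) := by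
    rw [intervalIntegral.integral_congr
      (fun u _ => inner_integral P b (b + w⁻¹) u)]
    rw [intervalIntegral.integral_finset_sum (fun m (_ : m ∈ P.support) =>
      Continuous.intervalIntegrable (by continuity) a (a + w⁻¹))]
    refine Finset.sum_congr rfl fun m _ => ?_
    have : (fun u : ℝ => coeff m P * u ^ (m 0)
          * (((b + w⁻¹) ^ (m 1 + 1) - b ^ (m 1 + 1)) / (m 1 + 1)))
        = fun u : ℝ => (coeff m P * (((b + w⁻¹) ^ (m 1 + 1) - b ^ (m 1 + 1)) / (m 1 + 1)))
          * u ^ (m 0) := by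
      funext u; ring
    rw [intervalIntegral.integral_congr (fun u _ => congrFun this u),
      intervalIntegral.integral_const_mul, integral_pow]
    ring
  rw [houter, Qavg, map_sum, Finset.mul_sum]
  refine Finset.sum_congr rfl fun m _ => ?_
  rw [smul_eq_C_mul, map_mul, map_mul, eval_C, eval_Ipoly, eval_Ipoly]
  have h0 : ((m 0 : ℝ) + 1) ≠ 0 := by positivity
  have h1 : ((m 1 : ℝ) + 1) ≠ 0 := by positivity
  simp only [Matrix.cons_val_zero, Matrix.cons_val_one, Matrix.head_cons]
  field_simp

end AuxStatement5

/-- S_w maps algebraic polynomials of total degree at most r − 1 into algebraic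
polynomials of the same degree. -/
theorem statement5 (χ : ℝ × ℝ → ℝ) (hχc : Continuous χ) (hχb : ∃ C : ℝ, ∀ p, |χ p| ≤ C)
    (hpart : PartitionOfUnity2 χ)
    (r : ℕ) (hr : 1 ≤ r) (c : ℝ)
    (hMr : Mmoment χ r < ⊤)
    (hmom : MomentCondition χ r c)
    (w : ℝ) (hw : 0 < w)
    (P : MvPolynomial (Fin 2) ℝ) (hP : P.totalDegree ≤ r - 1) :
    ∃ Q : MvPolynomial (Fin 2) ℝ, Q.totalDegree = P.totalDegree ∧
      ∀ x y : ℝ, Sop χ w (fun p => MvPolynomial.eval ![p.1, p.2] P) x y =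
        MvPolynomial.eval ![x, y] Q := by
  have hw' : w ≠ 0 := ne_of_gt hw
  refine ⟨Qavg w P, Qavg_totalDegree w hw' P, fun x y => ?_⟩
  have hQd : (Qavg w P).totalDegree ≤ r - 1 := by
    rw [Qavg_totalDegree w hw' P]; exact hP
  obtain ⟨hs, hv⟩ := repro χ hχb hpart r hr c hMr hmom (Qavg w P) hQd w hw' (w*x) (w*y)
  have hterm : ∀ k j : ℤ, χ (w * x - (k : ℝ), w * y - (j : ℝ)) *
      (w ^ 2 * ∫ u in ((k : ℝ) / w)..(((k : ℝ) + 1) / w),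
        ∫ v in ((j : ℝ) / w)..(((j : ℝ) + 1) / w), MvPolynomial.eval ![u, v] P)
      = χ (w * x - (k : ℝ), w * y - (j : ℝ))
        * MvPolynomial.eval ![(k:ℝ)/w, (j:ℝ)/w] (Qavg w P) := by
    intro k j
    congr 1
    rw [show ((k : ℝ) + 1) / w = (k:ℝ)/w + w⁻¹ from by rw [add_div, one_div],
      show ((j : ℝ) + 1) / w = (j:ℝ)/w + w⁻¹ from by rw [add_div, one_div]]
    exact double_integral P w hw ((k:ℝ)/w) ((j:ℝ)/w)
  calc Sop χ w (fun p => MvPolynomial.eval ![p.1, p.2] P) x y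
      = ∑' k : ℤ, ∑' j : ℤ, χ (w * x - (k : ℝ), w * y - (j : ℝ))
          * MvPolynomial.eval ![(k:ℝ)/w, (j:ℝ)/w] (Qavg w P) := by
        rw [Sop]
        exact tsum_congr fun k => tsum_congr fun j => hterm k j
    _ = ∑' kj : ℤ × ℤ, χ (w * x - (kj.1 : ℝ), w * y - (kj.2 : ℝ))
          * MvPolynomial.eval ![(kj.1:ℝ)/w, (kj.2:ℝ)/w] (Qavg w P) :=
        (Summable.tsum_prod' hs fun b => hs.prod_factor b).symm
    _ = MvPolynomial.eval ![(w*x)/w, (w*y)/w] (Qavg w P) := hv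
    _ = MvPolynomial.eval ![x, y] (Qavg w P) := by
        rw [mul_div_cancel_left₀ _ hw', mul_div_cancel_left₀ _ hw']
end

section
/- Let χ satisfy M_{(1,0)}(χ) < ∞, M_{(0,1)}(χ) < ∞ and M_{(1,1)}(χ) < ∞. Then for every w > 0 and every (x,y) ∈ ℝ²: (i) Σ_{k∈ℤ} Σ_{j∈ℤ} |χ(wx−k, wy−j)| · w² ∫_{k/w}^{(k+1)/w} ∫_{j/w}^{(j+1)/w} |u−x| du dv ≤ (1/(2w)) [M_{(0,0)}(χ) + 2 M_{(1,0)}(χ)]; (ii) Σ_{k∈ℤ} Σ_{j∈ℤ} |χ(wx−k, wy−j)| · w² ∫_{k/w}^{(k+1)/w} ∫_{j/w}^{(j+1)/w} |v−y| du dv ≤ (1/(2w)) [M_{(0,0)}(χ) + 2 M_{(0,1)}(χ)]; (iii) Σ_{k∈ℤ} Σ_{j∈ℤ} |χ(wx−k, wy−j)| · w² ∫_{k/w}^{(k+1)/w} ∫_{j/w}^{(j+1)/w} |u−x||v−y| du dv ≤ (1/(4w²)) [M_{(0,0)}(χ) + 2 M_{(1,0)}(χ) + 2 M_{(0,1)}(χ)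 + 4 M_{(1,1)}(χ)]. -/
open MeasureTheory Filter
open scoped ENNReal BigOperators Topology

section Aux6
open intervalIntegral

private lemma int_abs_bound (w : ℝ) (hw : 0 < w) (x a : ℝ) :
    w * ∫ u in a..(a + 1/w), |u - x| ≤ 1/(2*w) + |a - x| := by
  have hw' : (0:ℝ) < 1/w := by positivity
  have hab : a ≤ a + 1/w := by linarith
  have h1 : (∫ u in a..(a + 1/w), |u - x|) ≤ ∫ u in a..(a + 1/w), ((u - a) + |a - x|) := by
    apply intervalIntegral.integral_mono_on hab
    · exact Continuous.intervalIntegrable (by continuity) _ _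
    · exact Continuous.intervalIntegrable (by continuity) _ _
    · intro u hu
      calc |u - x| = |(u - a) + (a - x)| := by ring_nf
        _ ≤ |u - a| + |a - x| := abs_add_le _ _
        _ = (u - a) + |a - x| := by rw [abs_of_nonneg (by linarith [hu.1])]
  have h2 : (∫ u in a..(a + 1/w), ((u - a) + |a - x|)) = 1/(2*w^2) + |a - x|/w := by
    have e1 : (∫ u in a..(a + 1/w), ((u - a) + |a - x|))
        = (∫ u in a..(a + 1/w), u) + (∫ u in a..(a + 1/w), (-a + |a - x|)) := by
      rw [← intervalIntegral.integral_add intervalIntegrable_id intervalIntegrable_const]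
      congr 1; ext u; ring
    rw [e1, integral_id, intervalIntegral.integral_const]
    simp only [smul_eq_mul]
    field_simp
    ring
  calc w * ∫ u in a..(a + 1/w), |u - x| ≤ w * (1/(2*w^2) + |a - x|/w) :=
        mul_le_mul_of_nonneg_left (h1.trans h2.le) hw.le
    _ = 1/(2*w) + |a - x| := by field_simp

private lemma habs_eq (w : ℝ) (hw : 0 < w) (x : ℝ) (k : ℤ) :
    |(k:ℝ)/w - x| = |w*x - k|/w := by
  rw [abs_sub_comm, show x - (k:ℝ)/w = (w*x - k)/w by field_simp, abs_div, abs_of_pos hw]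

private lemma double_int_x (w : ℝ) (hw : 0 < w) (x : ℝ) (k j : ℤ) :
    w^2 * ∫ u in ((k:ℝ)/w)..(((k:ℝ)+1)/w), ∫ v in ((j:ℝ)/w)..(((j:ℝ)+1)/w), |u - x|
      ≤ 1/(2*w) + |w*x - k|/w := by
  have hinner : ∀ u : ℝ, (∫ _v in ((j:ℝ)/w)..(((j:ℝ)+1)/w), |u - x|) = (1/w) * |u - x| := by
    intro u
    rw [intervalIntegral.integral_const, smul_eq_mul]
    congr 1; field_simp; ring
  simp only [hinner]
  rw [intervalIntegral.integral_const_mul, show ((k:ℝ)+1)/w = (k:ℝ)/w + 1/w by ring]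
  have h := int_abs_bound w hw x ((k:ℝ)/w)
  have heq : w^2 * (1/w * ∫ u in ((k:ℝ)/w)..((k:ℝ)/w + 1/w), |u - x|)
      = w * ∫ u in ((k:ℝ)/w)..((k:ℝ)/w + 1/w), |u - x| := by
    field_simp
  rw [heq, ← habs_eq w hw x k]
  exact h

private lemma double_int_y (w : ℝ) (hw : 0 < w) (y : ℝ) (k j : ℤ) :
    w^2 * ∫ _u in ((k:ℝ)/w)..(((k:ℝ)+1)/w), ∫ v in ((j:ℝ)/w)..(((j:ℝ)+1)/w), |v - y|
      ≤ 1/(2*w) + |w*y - j|/w := by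
  rw [intervalIntegral.integral_const, smul_eq_mul,
    show ((k:ℝ)+1)/w - (k:ℝ)/w = 1/w by field_simp; ring,
    show ((j:ℝ)+1)/w = (j:ℝ)/w + 1/w by ring]
  have h := int_abs_bound w hw y ((j:ℝ)/w)
  have heq : w^2 * (1/w * ∫ v in ((j:ℝ)/w)..((j:ℝ)/w + 1/w), |v - y|)
      = w * ∫ v in ((j:ℝ)/w)..((j:ℝ)/w + 1/w), |v - y| := by
    field_simp
  rw [heq, ← habs_eq w hw y j]
  exact h

private lemma double_int_xy (w : ℝ) (hw : 0 < w) (x y : ℝ) (k j : ℤ) :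
    w^2 * ∫ u in ((k:ℝ)/w)..(((k:ℝ)+1)/w), ∫ v in ((j:ℝ)/w)..(((j:ℝ)+1)/w), |u - x| * |v - y|
      ≤ (1/(2*w) + |w*x - k|/w) * (1/(2*w) + |w*y - j|/w) := by
  have hw' : (0:ℝ) < 1/w := by positivity
  have hinner : ∀ u : ℝ, (∫ v in ((j:ℝ)/w)..(((j:ℝ)+1)/w), |u - x| * |v - y|)
      = |u - x| * ∫ v in ((j:ℝ)/w)..(((j:ℝ)+1)/w), |v - y| :=
    fun u => intervalIntegral.integral_const_mul _ _
  simp only [hinner]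
  rw [intervalIntegral.integral_mul_const]
  have hIx : (0:ℝ) ≤ ∫ u in ((k:ℝ)/w)..(((k:ℝ)+1)/w), |u - x| :=
    intervalIntegral.integral_nonneg (by rw [show ((k:ℝ)+1)/w = (k:ℝ)/w + 1/w by ring]; linarith)
      (fun u _ => abs_nonneg _)
  have hIy : (0:ℝ) ≤ ∫ v in ((j:ℝ)/w)..(((j:ℝ)+1)/w), |v - y| :=
    intervalIntegral.integral_nonneg (by rw [show ((j:ℝ)+1)/w = (j:ℝ)/w + 1/w by ring]; linarith)
      (fun v _ => abs_nonneg _)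
  have hx : w * ∫ u in ((k:ℝ)/w)..(((k:ℝ)+1)/w), |u - x| ≤ 1/(2*w) + |w*x - k|/w := by
    rw [show ((k:ℝ)+1)/w = (k:ℝ)/w + 1/w by ring, ← habs_eq w hw x k]
    exact int_abs_bound w hw x _
  have hy : w * ∫ v in ((j:ℝ)/w)..(((j:ℝ)+1)/w), |v - y| ≤ 1/(2*w) + |w*y - j|/w := by
    rw [show ((j:ℝ)+1)/w = (j:ℝ)/w + 1/w by ring, ← habs_eq w hw y j]
    exact int_abs_bound w hw y _
  calc w^2 * ((∫ u in ((k:ℝ)/w)..(((k:ℝ)+1)/w), |u - x|) * ∫ v in ((j:ℝ)/w)..(((j:ℝ)+1)/w), |v - y|)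
      = (w * ∫ u in ((k:ℝ)/w)..(((k:ℝ)+1)/w), |u - x|) * (w * ∫ v in ((j:ℝ)/w)..(((j:ℝ)+1)/w), |v - y|) := by ring
    _ ≤ (1/(2*w) + |w*x - k|/w) * (1/(2*w) + |w*y - j|/w) :=
        mul_le_mul hx hy (by positivity) (by positivity)


end Aux6

private lemma tsum_le_absMoment' (χ : ℝ × ℝ → ℝ) (p₁ p₂ : ℕ) (u v : ℝ) :
    (∑' k : ℤ, ∑' j : ℤ, ENNReal.ofReal
      (|χ (u - (k : ℝ), v - (j : ℝ))| * |u - (k : ℝ)| ^ p₁ * |v - (j : ℝ)| ^ p₂))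
      ≤ absMoment χ p₁ p₂ := by
  rw [absMoment]
  exact le_iSup_of_le u (le_iSup (fun v : ℝ => ∑' k : ℤ, ∑' j : ℤ, ENNReal.ofReal
      (|χ (u - (k : ℝ), v - (j : ℝ))| * |u - (k : ℝ)| ^ p₁ * |v - (j : ℝ)| ^ p₂)) v)

/-- first moment estimates for the Kantorovich sampling operator. -/
theorem statement6 (χ : ℝ × ℝ → ℝ) (hχc : Continuous χ) (hχb : ∃ C : ℝ, ∀ p, |χ p| ≤ C)
    (hpart : PartitionOfUnity2 χ)
    (h10 : absMoment χ 1 0 < ⊤) (h01 : absMoment χ 0 1 < ⊤) (h11 : absMoment χ 1 1 < ⊤)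
    (w : ℝ) (hw : 0 < w) (x y : ℝ) :
    (∑' k : ℤ, ∑' j : ℤ, ENNReal.ofReal (|χ (w * x - (k : ℝ), w * y - (j : ℝ))| *
        (w ^ 2 * ∫ u in ((k : ℝ) / w)..(((k : ℝ) + 1) / w),
          ∫ v in ((j : ℝ) / w)..(((j : ℝ) + 1) / w), |u - x|)) ≤
      ENNReal.ofReal (1 / (2 * w)) * (absMoment χ 0 0 + 2 * absMoment χ 1 0)) ∧
    (∑' k : ℤ, ∑' j : ℤ, ENNReal.ofReal (|χ (w * x - (k : ℝ), w * y - (j : ℝ))| *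
        (w ^ 2 * ∫ u in ((k : ℝ) / w)..(((k : ℝ) + 1) / w),
          ∫ v in ((j : ℝ) / w)..(((j : ℝ) + 1) / w), |v - y|)) ≤
      ENNReal.ofReal (1 / (2 * w)) * (absMoment χ 0 0 + 2 * absMoment χ 0 1)) ∧
    (∑' k : ℤ, ∑' j : ℤ, ENNReal.ofReal (|χ (w * x - (k : ℝ), w * y - (j : ℝ))| *
        (w ^ 2 * ∫ u in ((k : ℝ) / w)..(((k : ℝ) + 1) / w),
          ∫ v in ((j : ℝ) / w)..(((j : ℝ) + 1) / w), |u - x| * |v - y|)) ≤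
      ENNReal.ofReal (1 / (4 * w ^ 2)) *
        (absMoment χ 0 0 + 2 * absMoment χ 1 0 + 2 * absMoment χ 0 1 +
          4 * absMoment χ 1 1)) := by
  constructor
  · -- part (i)
    have hterm : ∀ k j : ℤ,
        ENNReal.ofReal (|χ (w * x - (k : ℝ), w * y - (j : ℝ))| *
          (w ^ 2 * ∫ u in ((k : ℝ) / w)..(((k : ℝ) + 1) / w),
            ∫ v in ((j : ℝ) / w)..(((j : ℝ) + 1) / w), |u - x|)) ≤
        ENNReal.ofReal (1/(2*w)) * ENNReal.ofReal (|χ (w * x - (k : ℝ), w * y - (j : ℝ))|) +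
        ENNReal.ofReal (1/w) * ENNReal.ofReal (|χ (w * x - (k : ℝ), w * y - (j : ℝ))| * |w * x - (k : ℝ)|) := by
      intro k j
      set A := |χ (w * x - (k : ℝ), w * y - (j : ℝ))| with hA
      have hA0 : 0 ≤ A := abs_nonneg _
      have h1 : A * (w ^ 2 * ∫ u in ((k : ℝ) / w)..(((k : ℝ) + 1) / w),
            ∫ v in ((j : ℝ) / w)..(((j : ℝ) + 1) / w), |u - x|) ≤
          1/(2*w) * A + 1/w * (A * |w * x - (k : ℝ)|) := by
        calc A * (w ^ 2 * ∫ u in ((k : ℝ) / w)..(((k : ℝ) + 1) / w),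
              ∫ v in ((j : ℝ) / w)..(((j : ℝ) + 1) / w), |u - x|)
            ≤ A * (1/(2*w) + |w * x - (k : ℝ)|/w) :=
              mul_le_mul_of_nonneg_left (double_int_x w hw x k j) hA0
          _ = 1/(2*w) * A + 1/w * (A * |w * x - (k : ℝ)|) := by ring
      calc ENNReal.ofReal (A * (w ^ 2 * ∫ u in ((k : ℝ) / w)..(((k : ℝ) + 1) / w),
              ∫ v in ((j : ℝ) / w)..(((j : ℝ) + 1) / w), |u - x|))
          ≤ ENNReal.ofReal (1/(2*w) * A + 1/w * (A * |w * x - (k : ℝ)|)) :=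
            ENNReal.ofReal_le_ofReal h1
        _ = ENNReal.ofReal (1/(2*w) * A) + ENNReal.ofReal (1/w * (A * |w * x - (k : ℝ)|)) :=
            ENNReal.ofReal_add (by positivity) (by positivity)
        _ = _ := by
            rw [ENNReal.ofReal_mul (by positivity), ENNReal.ofReal_mul (by positivity)]
    calc (∑' k : ℤ, ∑' j : ℤ, ENNReal.ofReal (|χ (w * x - (k : ℝ), w * y - (j : ℝ))| *
            (w ^ 2 * ∫ u in ((k : ℝ) / w)..(((k : ℝ) + 1) / w),
              ∫ v in ((j : ℝ) / w)..(((j : ℝ) + 1) / w), |u - x|)))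
        ≤ ∑' k : ℤ, ∑' j : ℤ,
            (ENNReal.ofReal (1/(2*w)) * ENNReal.ofReal (|χ (w * x - (k : ℝ), w * y - (j : ℝ))|) +
             ENNReal.ofReal (1/w) * ENNReal.ofReal (|χ (w * x - (k : ℝ), w * y - (j : ℝ))| * |w * x - (k : ℝ)|)) :=
          ENNReal.tsum_le_tsum fun k => ENNReal.tsum_le_tsum fun j => hterm k j
      _ = ENNReal.ofReal (1/(2*w)) *
            (∑' k : ℤ, ∑' j : ℤ, ENNReal.ofReal (|χ (w * x - (k : ℝ), w * y - (j : ℝ))|)) +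
          ENNReal.ofReal (1/w) *
            (∑' k : ℤ, ∑' j : ℤ, ENNReal.ofReal (|χ (w * x - (k : ℝ), w * y - (j : ℝ))| * |w * x - (k : ℝ)|)) := by
          simp only [ENNReal.tsum_add, ENNReal.tsum_mul_left]
      _ ≤ ENNReal.ofReal (1/(2*w)) * absMoment χ 0 0 + ENNReal.ofReal (1/w) * absMoment χ 1 0 :=
          add_le_add
            (mul_le_mul_right (by simpa using tsum_le_absMoment' χ 0 0 (w*x) (w*y)) _)
            (mul_le_mul_right (by simpa using tsum_le_absMoment' χ 1 0 (w*x) (w*y)) _)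
      _ = ENNReal.ofReal (1 / (2 * w)) * (absMoment χ 0 0 + 2 * absMoment χ 1 0) := by
          rw [mul_add, ← mul_assoc]
          congr 2
          rw [show (2:ℝ≥0∞) = ENNReal.ofReal 2 by simp, ← ENNReal.ofReal_mul (by positivity)]
          congr 1; field_simp
  constructor
  · -- part (ii)
    have hterm : ∀ k j : ℤ,
        ENNReal.ofReal (|χ (w * x - (k : ℝ), w * y - (j : ℝ))| *
          (w ^ 2 * ∫ u in ((k : ℝ) / w)..(((k : ℝ) + 1) / w),
            ∫ v in ((j : ℝ) / w)..(((j : ℝ) + 1) / w), |v - y|)) ≤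
        ENNReal.ofReal (1/(2*w)) * ENNReal.ofReal (|χ (w * x - (k : ℝ), w * y - (j : ℝ))|) +
        ENNReal.ofReal (1/w) * ENNReal.ofReal (|χ (w * x - (k : ℝ), w * y - (j : ℝ))| * |w * y - (j : ℝ)|) := by
      intro k j
      set A := |χ (w * x - (k : ℝ), w * y - (j : ℝ))| with hA
      have hA0 : 0 ≤ A := abs_nonneg _
      have h1 : A * (w ^ 2 * ∫ u in ((k : ℝ) / w)..(((k : ℝ) + 1) / w),
            ∫ v in ((j : ℝ) / w)..(((j : ℝ) + 1) / w), |v - y|) ≤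
          1/(2*w) * A + 1/w * (A * |w * y - (j : ℝ)|) := by
        calc A * (w ^ 2 * ∫ u in ((k : ℝ) / w)..(((k : ℝ) + 1) / w),
              ∫ v in ((j : ℝ) / w)..(((j : ℝ) + 1) / w), |v - y|)
            ≤ A * (1/(2*w) + |w * y - (j : ℝ)|/w) :=
              mul_le_mul_of_nonneg_left (double_int_y w hw y k j) hA0
          _ = 1/(2*w) * A + 1/w * (A * |w * y - (j : ℝ)|) := by ring
      calc ENNReal.ofReal (A * (w ^ 2 * ∫ u in ((k : ℝ) / w)..(((k : ℝ) + 1) / w),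
              ∫ v in ((j : ℝ) / w)..(((j : ℝ) + 1) / w), |v - y|))
          ≤ ENNReal.ofReal (1/(2*w) * A + 1/w * (A * |w * y - (j : ℝ)|)) :=
            ENNReal.ofReal_le_ofReal h1
        _ = ENNReal.ofReal (1/(2*w) * A) + ENNReal.ofReal (1/w * (A * |w * y - (j : ℝ)|)) :=
            ENNReal.ofReal_add (by positivity) (by positivity)
        _ = _ := by
            rw [ENNReal.ofReal_mul (by positivity), ENNReal.ofReal_mul (by positivity)]
    calc (∑' k : ℤ, ∑' j : ℤ, ENNReal.ofReal (|χ (w * x - (k : ℝ), w * y - (j : ℝ))| *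
            (w ^ 2 * ∫ u in ((k : ℝ) / w)..(((k : ℝ) + 1) / w),
              ∫ v in ((j : ℝ) / w)..(((j : ℝ) + 1) / w), |v - y|)))
        ≤ ∑' k : ℤ, ∑' j : ℤ,
            (ENNReal.ofReal (1/(2*w)) * ENNReal.ofReal (|χ (w * x - (k : ℝ), w * y - (j : ℝ))|) +
             ENNReal.ofReal (1/w) * ENNReal.ofReal (|χ (w * x - (k : ℝ), w * y - (j : ℝ))| * |w * y - (j : ℝ)|)) :=
          ENNReal.tsum_le_tsum fun k => ENNReal.tsum_le_tsum fun j => hterm k j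
      _ = ENNReal.ofReal (1/(2*w)) *
            (∑' k : ℤ, ∑' j : ℤ, ENNReal.ofReal (|χ (w * x - (k : ℝ), w * y - (j : ℝ))|)) +
          ENNReal.ofReal (1/w) *
            (∑' k : ℤ, ∑' j : ℤ, ENNReal.ofReal (|χ (w * x - (k : ℝ), w * y - (j : ℝ))| * |w * y - (j : ℝ)|)) := by
          simp only [ENNReal.tsum_add, ENNReal.tsum_mul_left]
      _ ≤ ENNReal.ofReal (1/(2*w)) * absMoment χ 0 0 + ENNReal.ofReal (1/w) * absMoment χ 0 1 :=
          add_le_add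
            (mul_le_mul_right (by simpa using tsum_le_absMoment' χ 0 0 (w*x) (w*y)) _)
            (mul_le_mul_right (by simpa using tsum_le_absMoment' χ 0 1 (w*x) (w*y)) _)
      _ = ENNReal.ofReal (1 / (2 * w)) * (absMoment χ 0 0 + 2 * absMoment χ 0 1) := by
          rw [mul_add, ← mul_assoc]
          congr 2
          rw [show (2:ℝ≥0∞) = ENNReal.ofReal 2 by simp, ← ENNReal.ofReal_mul (by positivity)]
          congr 1; field_simp
  · -- part (iii)
    have hterm : ∀ k j : ℤ,
        ENNReal.ofReal (|χ (w * x - (k : ℝ), w * y - (j : ℝ))| *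
          (w ^ 2 * ∫ u in ((k : ℝ) / w)..(((k : ℝ) + 1) / w),
            ∫ v in ((j : ℝ) / w)..(((j : ℝ) + 1) / w), |u - x| * |v - y|)) ≤
        ENNReal.ofReal (1/(4*w^2)) * ENNReal.ofReal (|χ (w * x - (k : ℝ), w * y - (j : ℝ))|) +
        (ENNReal.ofReal (1/(2*w^2)) * ENNReal.ofReal (|χ (w * x - (k : ℝ), w * y - (j : ℝ))| * |w * x - (k : ℝ)|) +
        (ENNReal.ofReal (1/(2*w^2)) * ENNReal.ofReal (|χ (w * x - (k : ℝ), w * y - (j : ℝ))| * |w * y - (j : ℝ)|) +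
         ENNReal.ofReal (1/w^2) * ENNReal.ofReal (|χ (w * x - (k : ℝ), w * y - (j : ℝ))| * |w * x - (k : ℝ)| * |w * y - (j : ℝ)|))) := by
      intro k j
      set A := |χ (w * x - (k : ℝ), w * y - (j : ℝ))| with hA
      have hA0 : 0 ≤ A := abs_nonneg _
      set D := A * |w * x - (k : ℝ)| * |w * y - (j : ℝ)| with hD
      set B := A * |w * x - (k : ℝ)| with hB
      set C := A * |w * y - (j : ℝ)| with hC
      have hB0 : 0 ≤ B := by rw [hB]; positivity
      have hC0 : 0 ≤ C := by rw [hC]; positivity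
      have hD0 : 0 ≤ D := by rw [hD]; positivity
      have h1 : A * (w ^ 2 * ∫ u in ((k : ℝ) / w)..(((k : ℝ) + 1) / w),
            ∫ v in ((j : ℝ) / w)..(((j : ℝ) + 1) / w), |u - x| * |v - y|) ≤
          1/(4*w^2) * A + (1/(2*w^2) * B +
            (1/(2*w^2) * C +
             1/w^2 * D)) := by
        calc A * (w ^ 2 * ∫ u in ((k : ℝ) / w)..(((k : ℝ) + 1) / w),
              ∫ v in ((j : ℝ) / w)..(((j : ℝ) + 1) / w), |u - x| * |v - y|)
            ≤ A * ((1/(2*w) + |w * x - (k : ℝ)|/w) * (1/(2*w) + |w * y - (j : ℝ)|/w)) :=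
              mul_le_mul_of_nonneg_left (double_int_xy w hw x y k j) hA0
          _ = 1/(4*w^2) * A + (1/(2*w^2) * B +
              (1/(2*w^2) * C +
               1/w^2 * D)) := by
              field_simp
              ring
      calc ENNReal.ofReal (A * (w ^ 2 * ∫ u in ((k : ℝ) / w)..(((k : ℝ) + 1) / w),
              ∫ v in ((j : ℝ) / w)..(((j : ℝ) + 1) / w), |u - x| * |v - y|))
          ≤ ENNReal.ofReal (1/(4*w^2) * A + (1/(2*w^2) * B +
              (1/(2*w^2) * C +
               1/w^2 * D))) :=
            ENNReal.ofReal_le_ofReal h1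
        _ = ENNReal.ofReal (1/(4*w^2) * A) + (ENNReal.ofReal (1/(2*w^2) * B) +
              (ENNReal.ofReal (1/(2*w^2) * C) +
               ENNReal.ofReal (1/w^2 * D))) := by
            rw [ENNReal.ofReal_add (by positivity) (by positivity),
              ENNReal.ofReal_add (by positivity) (by positivity),
              ENNReal.ofReal_add (by positivity) (by positivity)]
        _ = _ := by
            rw [ENNReal.ofReal_mul (p := 1/(4*w^2)) (q := A) (by positivity),
              ENNReal.ofReal_mul (p := 1/(2*w^2)) (q := B) (by positivity),
              ENNReal.ofReal_mul (p := 1/(2*w^2)) (q := C) (by positivity),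
              ENNReal.ofReal_mul (p := 1/w^2) (q := D) (by positivity)]
    calc (∑' k : ℤ, ∑' j : ℤ, ENNReal.ofReal (|χ (w * x - (k : ℝ), w * y - (j : ℝ))| *
            (w ^ 2 * ∫ u in ((k : ℝ) / w)..(((k : ℝ) + 1) / w),
              ∫ v in ((j : ℝ) / w)..(((j : ℝ) + 1) / w), |u - x| * |v - y|)))
        ≤ ∑' k : ℤ, ∑' j : ℤ,
            (ENNReal.ofReal (1/(4*w^2)) * ENNReal.ofReal (|χ (w * x - (k : ℝ), w * y - (j : ℝ))|) +
            (ENNReal.ofReal (1/(2*w^2)) * ENNReal.ofReal (|χ (w * x - (k : ℝ), w * y - (j : ℝ))| * |w * x - (k : ℝ)|) +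
            (ENNReal.ofReal (1/(2*w^2)) * ENNReal.ofReal (|χ (w * x - (k : ℝ), w * y - (j : ℝ))| * |w * y - (j : ℝ)|) +
             ENNReal.ofReal (1/w^2) * ENNReal.ofReal (|χ (w * x - (k : ℝ), w * y - (j : ℝ))| * |w * x - (k : ℝ)| * |w * y - (j : ℝ)|)))) :=
          ENNReal.tsum_le_tsum fun k => ENNReal.tsum_le_tsum fun j => hterm k j
      _ = ENNReal.ofReal (1/(4*w^2)) *
            (∑' k : ℤ, ∑' j : ℤ, ENNReal.ofReal (|χ (w * x - (k : ℝ), w * y - (j : ℝ))|)) +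
          (ENNReal.ofReal (1/(2*w^2)) *
            (∑' k : ℤ, ∑' j : ℤ, ENNReal.ofReal (|χ (w * x - (k : ℝ), w * y - (j : ℝ))| * |w * x - (k : ℝ)|)) +
          (ENNReal.ofReal (1/(2*w^2)) *
            (∑' k : ℤ, ∑' j : ℤ, ENNReal.ofReal (|χ (w * x - (k : ℝ), w * y - (j : ℝ))| * |w * y - (j : ℝ)|)) +
           ENNReal.ofReal (1/w^2) *
            (∑' k : ℤ, ∑' j : ℤ, ENNReal.ofReal (|χ (w * x - (k : ℝ), w * y - (j : ℝ))| * |w * x - (k : ℝ)| * |w * y - (j : ℝ)|)))) := by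
          simp only [ENNReal.tsum_add, ENNReal.tsum_mul_left]
      _ ≤ ENNReal.ofReal (1/(4*w^2)) * absMoment χ 0 0 +
          (ENNReal.ofReal (1/(2*w^2)) * absMoment χ 1 0 +
          (ENNReal.ofReal (1/(2*w^2)) * absMoment χ 0 1 +
           ENNReal.ofReal (1/w^2) * absMoment χ 1 1)) := by
          gcongr
          · simpa using tsum_le_absMoment' χ 0 0 (w*x) (w*y)
          · simpa using tsum_le_absMoment' χ 1 0 (w*x) (w*y)
          · simpa using tsum_le_absMoment' χ 0 1 (w*x) (w*y)
          · simpa using tsum_le_absMoment' χ 1 1 (w*x) (w*y)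
      _ = ENNReal.ofReal (1 / (4 * w ^ 2)) *
            (absMoment χ 0 0 + 2 * absMoment χ 1 0 + 2 * absMoment χ 0 1 +
              4 * absMoment χ 1 1) := by
          have e2 : ENNReal.ofReal (1/(4*w^2)) * 2 = ENNReal.ofReal (1/(2*w^2)) := by
            rw [show (2:ℝ≥0∞) = ENNReal.ofReal 2 by simp, ← ENNReal.ofReal_mul (by positivity)]
            congr 1; field_simp; ring
          have e4 : ENNReal.ofReal (1/(4*w^2)) * 4 = ENNReal.ofReal (1/w^2) := by
            rw [show (4:ℝ≥0∞) = ENNReal.ofReal 4 by simp, ← ENNReal.ofReal_mul (by positivity)]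
            congr 1; field_simp
          rw [mul_add, mul_add, mul_add, ← mul_assoc, ← mul_assoc, ← mul_assoc, e2, e4]
          ring
end

section
/- Let χ satisfy M_{(p₁,p₂)}(χ) < ∞ for all p₁, p₂ ≤ 2. Then for every w > 0 and every (x,y) ∈ ℝ², writing T(g) := Σ_{k∈ℤ} Σ_{j∈ℤ} |χ(wx−k, wy−j)| · w² ∫_{k/w}^{(k+1)/w} ∫_{j/w}^{(j+1)/w} g(u,v) du dv, one has: (i) T((u−x)²) ≤ (1/(3w²)) [M_{(0,0)}(χ) + 3 M_{(2,0)}(χ) + 3 M_{(1,0)}(χ)]; (ii) T((v−y)²) ≤ (1/(3w²)) [M_{(0,0)}(χ) + 3 M_{(0,2)}(χ) + 3 M_{(0,1)}(χ)]; (iii) T((u−x)²|v−y|) ≤ (1/(6w³)) [M_{(0,0)}(χ) + 3 M_{(2,0)}(χ) + 3 M_{(1,0)}(χ) + 2 M_{(0,1)}(χ) + 6 M_{(2,1)}(χ) + 6 M_{(1,1)}(χ)]; (iv) T(|u−x|(v−y)²) ≤ (1/(6w³)) [M_{(0,0)}(χ) + 3 M_{(0,2)}(χ) + 3 M_{(0,1)}(χ)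 + 2 M_{(1,0)}(χ) + 6 M_{(1,2)}(χ) + 6 M_{(1,1)}(χ)]; (v) T((u−x)²(v−y)²) ≤ (1/(9w⁴)) [M_{(0,0)}(χ) + 3 M_{(2,0)}(χ) + 3 M_{(0,2)}(χ) + 3 M_{(0,1)}(χ) + 3 M_{(1,0)}(χ) + 9 M_{(2,2)}(χ) + 9 M_{(1,2)}(χ) + 9 M_{(2,1)}(χ) + 9 M_{(1,1)}(χ)]. -/
open MeasureTheory Filter
open scoped ENNReal BigOperators Topology

/-- The auxiliary absolute Kantorovich-type sum T used in STATEMENT 8. -/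
noncomputable def Tsum (χ : ℝ × ℝ → ℝ) (w x y : ℝ) (g : ℝ → ℝ → ℝ) : ℝ≥0∞ :=
  ∑' k : ℤ, ∑' j : ℤ, ENNReal.ofReal (|χ (w * x - (k : ℝ), w * y - (j : ℝ))| *
    (w ^ 2 * ∫ u in ((k : ℝ) / w)..(((k : ℝ) + 1) / w),
      ∫ v in ((j : ℝ) / w)..(((j : ℝ) + 1) / w), g u v))


namespace St8Aux

open intervalIntegral

lemma ends_le (w : ℝ) (hw : 0 < w) (j : ℤ) : (j:ℝ)/w ≤ ((j:ℝ)+1)/w := by gcongr; linarith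

lemma dlen (w : ℝ) (j : ℤ) : ((j:ℝ)+1)/w - (j:ℝ)/w = 1/w := by rw [add_div]; ring

lemma intSq (w : ℝ) (hw : 0 < w) (x : ℝ) (k : ℤ) :
    w * ∫ u in ((k:ℝ)/w)..(((k:ℝ)+1)/w), (u - x)^2
      = ((w*x-k)^2 - (w*x-k) + 1/3)/w^2 := by
  rw [intervalIntegral.integral_comp_sub_right (fun t => t^2) x, integral_pow]
  have hw' : w ≠ 0 := hw.ne'
  field_simp
  simp only [div_pow]
  field_simp
  ring

lemma intSq_nonneg (w : ℝ) (hw : 0 < w) (x : ℝ) (k : ℤ) :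
    0 ≤ ∫ u in ((k:ℝ)/w)..(((k:ℝ)+1)/w), (u - x)^2 := by
  apply intervalIntegral.integral_nonneg (ends_le w hw k)
  intro u _; positivity

lemma intSq_le (w : ℝ) (hw : 0 < w) (x : ℝ) (k : ℤ) :
    w * ∫ u in ((k:ℝ)/w)..(((k:ℝ)+1)/w), (u - x)^2
      ≤ (|w*x-k|^2 + |w*x-k| + 1/3)/w^2 := by
  rw [intSq w hw x k]
  have h1 : -(w*x-k) ≤ |w*x-(k:ℝ)| := neg_le_abs _
  have h2 : (w*x-(k:ℝ))^2 = |w*x-(k:ℝ)|^2 := (sq_abs _).symm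
  gcongr (?_ / w^2)
  linarith

lemma intAbs_le (w : ℝ) (hw : 0 < w) (y : ℝ) (j : ℤ) :
    w * ∫ v in ((j:ℝ)/w)..(((j:ℝ)+1)/w), |v - y| ≤ (|w*y-j| + 1/2)/w := by
  have hw' : w ≠ 0 := hw.ne'
  rw [intervalIntegral.integral_comp_sub_right (fun t => |t|) y]
  set a : ℝ := (j:ℝ)/w - y with ha
  have hb : ((j:ℝ)+1)/w - y = a + 1/w := by rw [ha, add_div]; ring
  rw [hb]
  have hle : a ≤ a + 1/w := by nlinarith [one_div_pos.mpr hw]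
  have h1 : (∫ t in a..(a + 1/w), |t|) ≤ ∫ t in a..(a + 1/w), ((|a| - a) + t) := by
    apply intervalIntegral.integral_mono_on hle
    · exact (continuous_abs).intervalIntegrable _ _
    · exact (continuous_const.add continuous_id).intervalIntegrable _ _
    · intro t ht
      rcases ht with ⟨h1, h2⟩
      have h3 := abs_add_le a (t - a)
      have h4 : a + (t - a) = t := by ring
      rw [h4] at h3
      have h5 : |t - a| = t - a := abs_of_nonneg (by linarith)
      linarith
  have h2 : (∫ t in a..(a + 1/w), ((|a| - a) + t)) = (1/w) * (|a| - a) + ((a+1/w)^2 - a^2)/2 := by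
    rw [intervalIntegral.integral_add intervalIntegrable_const intervalIntegrable_id,
      intervalIntegral.integral_const, integral_id]
    simp [smul_eq_mul]
  have haabs : |a| = |w*y - j| / w := by
    rw [ha, show (j:ℝ)/w - y = -((w*y-j)/w) by field_simp; ring,
      abs_neg, abs_div, abs_of_pos hw]
  have key : w * (∫ t in a..(a + 1/w), |t|) ≤ w * ((1/w) * (|a| - a) + ((a+1/w)^2 - a^2)/2) :=
    mul_le_mul_of_nonneg_left (h1.trans_eq h2) hw.le
  refine key.trans (le_of_eq ?_)
  rw [haabs]
  field_simp
  ring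

lemma intAbs_nonneg (w : ℝ) (hw : 0 < w) (y : ℝ) (j : ℤ) :
    0 ≤ ∫ v in ((j:ℝ)/w)..(((j:ℝ)+1)/w), |v - y| := by
  apply intervalIntegral.integral_nonneg (ends_le w hw j)
  intro u _; exact abs_nonneg _

lemma sep (a b c d : ℝ) (f g : ℝ → ℝ) :
    (∫ u in a..b, ∫ v in c..d, f u * g v)
      = (∫ u in a..b, f u) * (∫ v in c..d, g v) := by
  simp_rw [intervalIntegral.integral_const_mul]
  rw [intervalIntegral.integral_mul_const]

lemma val1 (w x : ℝ) (hw : 0 < w) (k j : ℤ) :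
    w^2 * (∫ u in ((k:ℝ)/w)..(((k:ℝ)+1)/w), ∫ _v in ((j:ℝ)/w)..(((j:ℝ)+1)/w), (u - x)^2)
      = w * ∫ u in ((k:ℝ)/w)..(((k:ℝ)+1)/w), (u - x)^2 := by
  simp_rw [intervalIntegral.integral_const, smul_eq_mul, dlen w j,
    intervalIntegral.integral_const_mul]
  have : w ≠ 0 := hw.ne'
  field_simp

lemma val2 (w y : ℝ) (hw : 0 < w) (k j : ℤ) :
    w^2 * (∫ _u in ((k:ℝ)/w)..(((k:ℝ)+1)/w), ∫ v in ((j:ℝ)/w)..(((j:ℝ)+1)/w), (v - y)^2)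
      = w * ∫ v in ((j:ℝ)/w)..(((j:ℝ)+1)/w), (v - y)^2 := by
  rw [intervalIntegral.integral_const, smul_eq_mul, dlen w k]
  have : w ≠ 0 := hw.ne'
  field_simp

lemma val3 (w x y : ℝ) (k j : ℤ) :
    w^2 * (∫ u in ((k:ℝ)/w)..(((k:ℝ)+1)/w), ∫ v in ((j:ℝ)/w)..(((j:ℝ)+1)/w),
        (u - x)^2 * |v - y|)
      = (w * ∫ u in ((k:ℝ)/w)..(((k:ℝ)+1)/w), (u - x)^2)
        * (w * ∫ v in ((j:ℝ)/w)..(((j:ℝ)+1)/w), |v - y|) := by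
  rw [sep _ _ _ _ (fun u => (u-x)^2) (fun v => |v-y|)]
  ring

lemma val4 (w x y : ℝ) (k j : ℤ) :
    w^2 * (∫ u in ((k:ℝ)/w)..(((k:ℝ)+1)/w), ∫ v in ((j:ℝ)/w)..(((j:ℝ)+1)/w),
        |u - x| * (v - y)^2)
      = (w * ∫ u in ((k:ℝ)/w)..(((k:ℝ)+1)/w), |u - x|)
        * (w * ∫ v in ((j:ℝ)/w)..(((j:ℝ)+1)/w), (v - y)^2) := by
  rw [sep _ _ _ _ (fun u => |u-x|) (fun v => (v-y)^2)]
  ring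

lemma val5 (w x y : ℝ) (k j : ℤ) :
    w^2 * (∫ u in ((k:ℝ)/w)..(((k:ℝ)+1)/w), ∫ v in ((j:ℝ)/w)..(((j:ℝ)+1)/w),
        (u - x)^2 * (v - y)^2)
      = (w * ∫ u in ((k:ℝ)/w)..(((k:ℝ)+1)/w), (u - x)^2)
        * (w * ∫ v in ((j:ℝ)/w)..(((j:ℝ)+1)/w), (v - y)^2) := by
  rw [sep _ _ _ _ (fun u => (u-x)^2) (fun v => (v-y)^2)]
  ring

lemma tsum_le_absMoment (χ : ℝ × ℝ → ℝ) (X Y : ℝ) (p q : ℕ) :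
    (∑' k : ℤ, ∑' j : ℤ,
      ENNReal.ofReal (|χ (X - (k:ℝ), Y - (j:ℝ))| * |X - (k:ℝ)| ^ p * |Y - (j:ℝ)| ^ q))
      ≤ absMoment χ p q := by
  unfold absMoment
  refine le_trans ?_ (le_iSup _ X)
  exact le_iSup (fun v => ∑' k : ℤ, ∑' j : ℤ,
    ENNReal.ofReal (|χ (X - (k:ℝ), v - (j:ℝ))| * |X - (k:ℝ)| ^ p * |v - (j:ℝ)| ^ q)) Y

lemma master (χ : ℝ × ℝ → ℝ) (w x y : ℝ) (g : ℝ → ℝ → ℝ) {n : ℕ}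
    (c : Fin n → ℝ) (pv qv : Fin n → ℕ) (hc : ∀ i, 0 ≤ c i)
    (hbound : ∀ k j : ℤ,
      |χ (w * x - (k:ℝ), w * y - (j:ℝ))| *
        (w ^ 2 * ∫ u in ((k : ℝ) / w)..(((k : ℝ) + 1) / w),
          ∫ v in ((j : ℝ) / w)..(((j : ℝ) + 1) / w), g u v)
        ≤ ∑ i, c i * (|χ (w * x - (k:ℝ), w * y - (j:ℝ))| *
            |w * x - (k:ℝ)| ^ (pv i) * |w * y - (j:ℝ)| ^ (qv i))) :
    Tsum χ w x y g ≤ ∑ i, ENNReal.ofReal (c i) * absMoment χ (pv i) (qv i) := by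
  have step1 : Tsum χ w x y g ≤ ∑' k : ℤ, ∑' j : ℤ, ∑ i,
      ENNReal.ofReal (c i) * ENNReal.ofReal (|χ (w * x - (k:ℝ), w * y - (j:ℝ))| *
        |w * x - (k:ℝ)| ^ (pv i) * |w * y - (j:ℝ)| ^ (qv i)) := by
    unfold Tsum
    refine ENNReal.tsum_le_tsum fun k => ENNReal.tsum_le_tsum fun j => ?_
    refine le_trans (ENNReal.ofReal_le_ofReal (hbound k j)) ?_
    rw [ENNReal.ofReal_sum_of_nonneg (fun i _ => mul_nonneg (hc i) (by positivity))]
    refine Finset.sum_le_sum fun i _ => ?_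
    rw [ENNReal.ofReal_mul (hc i)]
  refine le_trans step1 ?_
  rw [tsum_congr (fun k : ℤ => Summable.tsum_finsetSum (fun i _ => ENNReal.summable)),
      Summable.tsum_finsetSum (fun i _ => ENNReal.summable)]
  refine Finset.sum_le_sum fun i _ => ?_
  rw [tsum_congr (fun k : ℤ => ENNReal.tsum_mul_left), ENNReal.tsum_mul_left]
  exact mul_le_mul_right (tsum_le_absMoment χ (w*x) (w*y) (pv i) (qv i)) _

end St8Aux

open St8Aux in
set_option maxHeartbeats 1600000 in
/-- second moment estimates for the Kantorovich sampling operator. -/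
theorem statement8 (χ : ℝ × ℝ → ℝ) (hχc : Continuous χ) (hχb : ∃ C : ℝ, ∀ p, |χ p| ≤ C)
    (hpart : PartitionOfUnity2 χ)
    (hfin : ∀ p₁ p₂ : ℕ, p₁ ≤ 2 → p₂ ≤ 2 → absMoment χ p₁ p₂ < ⊤)
    (w : ℝ) (hw : 0 < w) (x y : ℝ) :
    (Tsum χ w x y (fun u _ => (u - x) ^ 2) ≤
      ENNReal.ofReal (1 / (3 * w ^ 2)) *
        (absMoment χ 0 0 + 3 * absMoment χ 2 0 + 3 * absMoment χ 1 0)) ∧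
    (Tsum χ w x y (fun _ v => (v - y) ^ 2) ≤
      ENNReal.ofReal (1 / (3 * w ^ 2)) *
        (absMoment χ 0 0 + 3 * absMoment χ 0 2 + 3 * absMoment χ 0 1)) ∧
    (Tsum χ w x y (fun u v => (u - x) ^ 2 * |v - y|) ≤
      ENNReal.ofReal (1 / (6 * w ^ 3)) *
        (absMoment χ 0 0 + 3 * absMoment χ 2 0 + 3 * absMoment χ 1 0 + 2 * absMoment χ 0 1 +
          6 * absMoment χ 2 1 + 6 * absMoment χ 1 1)) ∧
    (Tsum χ w x y (fun u v => |u - x| * (v - y) ^ 2) ≤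
      ENNReal.ofReal (1 / (6 * w ^ 3)) *
        (absMoment χ 0 0 + 3 * absMoment χ 0 2 + 3 * absMoment χ 0 1 + 2 * absMoment χ 1 0 +
          6 * absMoment χ 1 2 + 6 * absMoment χ 1 1)) ∧
    (Tsum χ w x y (fun u v => (u - x) ^ 2 * (v - y) ^ 2) ≤
      ENNReal.ofReal (1 / (9 * w ^ 4)) *
        (absMoment χ 0 0 + 3 * absMoment χ 2 0 + 3 * absMoment χ 0 2 + 3 * absMoment χ 0 1 +
          3 * absMoment χ 1 0 + 9 * absMoment χ 2 2 + 9 * absMoment χ 1 2 +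
          9 * absMoment χ 2 1 + 9 * absMoment χ 1 1)) := by
  have hw' : w ≠ 0 := hw.ne'
  have hC : ∀ k j : ℤ, (0:ℝ) ≤ |χ (w * x - (k:ℝ), w * y - (j:ℝ))| := fun k j => abs_nonneg _
  have e2a : ENNReal.ofReal (1/w^2) = 3 * ENNReal.ofReal (1/(3*w^2)) := by
    rw [show (3:ℝ≥0∞) = ENNReal.ofReal (3:ℝ) by simp, ← ENNReal.ofReal_mul (by norm_num)]
    congr 1; field_simp
  have e3a : ENNReal.ofReal (1/w^3) = 6 * ENNReal.ofReal (1/(6*w^3)) := by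
    rw [show (6:ℝ≥0∞) = ENNReal.ofReal (6:ℝ) by simp, ← ENNReal.ofReal_mul (by norm_num)]
    congr 1; field_simp
  have e3b : ENNReal.ofReal (1/(2*w^3)) = 3 * ENNReal.ofReal (1/(6*w^3)) := by
    rw [show (3:ℝ≥0∞) = ENNReal.ofReal (3:ℝ) by simp, ← ENNReal.ofReal_mul (by norm_num)]
    congr 1; field_simp; ring
  have e3c : ENNReal.ofReal (1/(3*w^3)) = 2 * ENNReal.ofReal (1/(6*w^3)) := by
    rw [show (2:ℝ≥0∞) = ENNReal.ofReal (2:ℝ) by simp, ← ENNReal.ofReal_mul (by norm_num)]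
    congr 1; field_simp; ring
  have e4a : ENNReal.ofReal (1/w^4) = 9 * ENNReal.ofReal (1/(9*w^4)) := by
    rw [show (9:ℝ≥0∞) = ENNReal.ofReal (9:ℝ) by simp, ← ENNReal.ofReal_mul (by norm_num)]
    congr 1; field_simp
  have e4b : ENNReal.ofReal (1/(3*w^4)) = 3 * ENNReal.ofReal (1/(9*w^4)) := by
    rw [show (3:ℝ≥0∞) = ENNReal.ofReal (3:ℝ) by simp, ← ENNReal.ofReal_mul (by norm_num)]
    congr 1; field_simp; ring
  refine ⟨?_, ?_, ?_, ?_, ?_⟩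
  · calc Tsum χ w x y (fun u _ => (u - x) ^ 2)
        ≤ ∑ i : Fin 3, ENNReal.ofReal (![1/w^2, 1/w^2, 1/(3*w^2)] i) *
            absMoment χ (![2,1,0] i) (![0,0,0] i) := by
          apply master χ w x y _ _ _ _ (fun i => by fin_cases i <;> norm_num [Matrix.cons_val_succ'] <;> positivity)
          intro k j
          simp only [Fin.sum_univ_succ, Fin.sum_univ_zero, Matrix.cons_val_zero,
            Matrix.cons_val_succ, add_zero]
          rw [val1 w x hw k j]
          refine (mul_le_mul_of_nonneg_left (intSq_le w hw x k) (hC k j)).trans (le_of_eq ?_)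
          field_simp
          ring
      _ = _ := by
          simp only [Fin.sum_univ_succ, Fin.sum_univ_zero, Matrix.cons_val_zero,
            Matrix.cons_val_succ, add_zero]
          rw [e2a, show (1:ℝ)/(3*w^2) = 1/(3*w^2) by ring]
          ring
  · calc Tsum χ w x y (fun _ v => (v - y) ^ 2)
        ≤ ∑ i : Fin 3, ENNReal.ofReal (![1/w^2, 1/w^2, 1/(3*w^2)] i) *
            absMoment χ (![0,0,0] i) (![2,1,0] i) := by
          apply master χ w x y _ _ _ _ (fun i => by fin_cases i <;> norm_num [Matrix.cons_val_succ'] <;> positivity)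
          intro k j
          simp only [Fin.sum_univ_succ, Fin.sum_univ_zero, Matrix.cons_val_zero,
            Matrix.cons_val_succ, add_zero]
          rw [val2 w y hw k j]
          refine (mul_le_mul_of_nonneg_left (intSq_le w hw y j) (hC k j)).trans (le_of_eq ?_)
          field_simp
          ring
      _ = _ := by
          simp only [Fin.sum_univ_succ, Fin.sum_univ_zero, Matrix.cons_val_zero,
            Matrix.cons_val_succ, add_zero]
          rw [e2a]
          ring
  · calc Tsum χ w x y (fun u v => (u - x) ^ 2 * |v - y|)
        ≤ ∑ i : Fin 6, ENNReal.ofReal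
              (![1/w^3, 1/(2*w^3), 1/w^3, 1/(2*w^3), 1/(3*w^3), 1/(6*w^3)] i) *
            absMoment χ (![2,2,1,1,0,0] i) (![1,0,1,0,1,0] i) := by
          apply master χ w x y _ _ _ _ (fun i => by fin_cases i <;> norm_num [Matrix.cons_val_succ'] <;> positivity)
          intro k j
          simp only [Fin.sum_univ_succ, Fin.sum_univ_zero, Matrix.cons_val_zero,
            Matrix.cons_val_succ, add_zero]
          rw [val3 w x y k j]
          have key := mul_le_mul (intSq_le w hw x k) (intAbs_le w hw y j)
            (mul_nonneg hw.le (intAbs_nonneg w hw y j)) (by positivity)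
          refine (mul_le_mul_of_nonneg_left key (hC k j)).trans (le_of_eq ?_)
          field_simp
          ring
      _ = _ := by
          simp only [Fin.sum_univ_succ, Fin.sum_univ_zero, Matrix.cons_val_zero,
            Matrix.cons_val_succ, add_zero]
          rw [e3a, e3b, e3c]
          ring
  · calc Tsum χ w x y (fun u v => |u - x| * (v - y) ^ 2)
        ≤ ∑ i : Fin 6, ENNReal.ofReal
              (![1/w^3, 1/w^3, 1/(3*w^3), 1/(2*w^3), 1/(2*w^3), 1/(6*w^3)] i) *
            absMoment χ (![1,1,1,0,0,0] i) (![2,1,0,2,1,0] i) := by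
          apply master χ w x y _ _ _ _ (fun i => by fin_cases i <;> norm_num [Matrix.cons_val_succ'] <;> positivity)
          intro k j
          simp only [Fin.sum_univ_succ, Fin.sum_univ_zero, Matrix.cons_val_zero,
            Matrix.cons_val_succ, add_zero]
          rw [val4 w x y k j]
          have key := mul_le_mul (intAbs_le w hw x k) (intSq_le w hw y j)
            (mul_nonneg hw.le (intSq_nonneg w hw y j)) (by positivity)
          refine (mul_le_mul_of_nonneg_left key (hC k j)).trans (le_of_eq ?_)
          field_simp
          ring
      _ = _ := by
          simp only [Fin.sum_univ_succ, Fin.sum_univ_zero, Matrix.cons_val_zero,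
            Matrix.cons_val_succ, add_zero]
          rw [e3a, e3b, e3c]
          ring
  · calc Tsum χ w x y (fun u v => (u - x) ^ 2 * (v - y) ^ 2)
        ≤ ∑ i : Fin 9, ENNReal.ofReal
              (![1/w^4, 1/w^4, 1/(3*w^4), 1/w^4, 1/w^4, 1/(3*w^4), 1/(3*w^4), 1/(3*w^4),
                1/(9*w^4)] i) *
            absMoment χ (![2,2,2,1,1,1,0,0,0] i) (![2,1,0,2,1,0,2,1,0] i) := by
          apply master χ w x y _ _ _ _ (fun i => by fin_cases i <;> norm_num [Matrix.cons_val_succ'] <;> positivity)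
          intro k j
          simp only [Fin.sum_univ_succ, Fin.sum_univ_zero, Matrix.cons_val_zero,
            Matrix.cons_val_succ, add_zero]
          rw [val5 w x y k j]
          have key := mul_le_mul (intSq_le w hw x k) (intSq_le w hw y j)
            (mul_nonneg hw.le (intSq_nonneg w hw y j)) (by positivity)
          refine (mul_le_mul_of_nonneg_left key (hC k j)).trans (le_of_eq ?_)
          field_simp
          ring
      _ = _ := by
          simp only [Fin.sum_univ_succ, Fin.sum_univ_zero, Matrix.cons_val_zero,
            Matrix.cons_val_succ, add_zero]
          rw [e4a, e4b]
          ring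
end

section
/- Let χ satisfy M₂(χ) < ∞ and the moment condition of order 2 with constant c, and let f ∈ C²(ℝ²). Then ‖G_w f − f‖_∞ = O(w^{−2}) as w → ∞; in particular w · (G_w f(x,y) − f(x,y)) → 0 uniformly in (x,y) ∈ ℝ² as w → ∞. -/
open MeasureTheory Filter
open scoped ENNReal BigOperators Topology

lemma lip1 {g : ℝ → ℝ} {C : ℝ} (hg : Differentiable ℝ g)
    (hC : ∀ t, |deriv g t| ≤ C) (a b : ℝ) : |g b - g a| ≤ C * |b - a| := by
  have := Convex.norm_image_sub_le_of_norm_deriv_le (s := Set.univ)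
    (fun x _ => (hg x)) (fun x _ => hC x) convex_univ (Set.mem_univ a) (Set.mem_univ b)
  simpa [Real.norm_eq_abs] using this

lemma taylor1 {g : ℝ → ℝ} {C : ℝ} (hg : Differentiable ℝ g)
    (hg' : Differentiable ℝ (deriv g)) (hC : ∀ t, |deriv (deriv g) t| ≤ C)
    (a b : ℝ) : |g b - g a - deriv g a * (b - a)| ≤ C * (b - a) ^ 2 := by
  set h : ℝ → ℝ := fun t => g t - deriv g a * t with hh
  have hdh : ∀ t, deriv h t = deriv g t - deriv g a := by
    intro t
    rw [hh]
    rw [deriv_fun_sub (hg t) (by fun_prop), deriv_const_mul _ (by fun_prop)]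
    simp
  have hhd : Differentiable ℝ h := by
    intro t; exact ((hg t).sub (by fun_prop))
  have key : ∀ t ∈ Set.uIcc a b, |deriv h t| ≤ C * |b - a| := by
    intro t ht
    rw [hdh]
    have h1 : |deriv g t - deriv g a| ≤ C * |t - a| := lip1 hg' hC a t
    have h2 : |t - a| ≤ |b - a| := by
      rcases Set.mem_uIcc.1 ht with ⟨h3, h4⟩ | ⟨h3, h4⟩ <;> rw [abs_sub_le_iff] <;>
        constructor <;> cases abs_cases (b - a) <;> linarith
    have hC0 : 0 ≤ C := le_trans (abs_nonneg _) (hC 0)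
    nlinarith [abs_nonneg (t - a)]
  have := Convex.norm_image_sub_le_of_norm_deriv_le (s := Set.uIcc a b)
    (fun x _ => hhd x) key (convex_uIcc a b) Set.left_mem_uIcc Set.right_mem_uIcc
  have e : h b - h a = g b - g a - deriv g a * (b - a) := by rw [hh]; ring
  rw [e] at this
  calc |g b - g a - deriv g a * (b - a)| ≤ C * |b - a| * |b - a| := by
        simpa [Real.norm_eq_abs] using this
    _ = C * (b - a)^2 := by rw [mul_assoc, ← abs_mul, ← sq, abs_sq]


lemma abs_tsum_le' {ι : Type*} {f : ι → ℝ} (h : Summable fun i => |f i|) :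
    |∑' i, f i| ≤ ∑' i, |f i| := by
  have h2 : Summable fun i => ‖f i‖ := by simp only [Real.norm_eq_abs]; exact h
  have := norm_tsum_le_tsum_norm h2
  simp only [Real.norm_eq_abs] at this
  exact this

/-- From finiteness of an iterated ENNReal sum of `ofReal F`, get real iterated summability. -/
lemma summable_of_ennreal {F : ℤ → ℤ → ℝ} (hF : ∀ k j, 0 ≤ F k j) {B : ℝ≥0∞} (hB : B ≠ ⊤)
    (h : ∑' k : ℤ, ∑' j : ℤ, ENNReal.ofReal (F k j) ≤ B) :
    (∀ k, Summable (F k)) ∧ Summable (fun k => ∑' j, F k j) ∧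
      ∑' k : ℤ, ∑' j : ℤ, F k j ≤ B.toReal := by
  have htot : (∑' k : ℤ, ∑' j : ℤ, ENNReal.ofReal (F k j)) ≠ ⊤ := (lt_of_le_of_lt h hB.lt_top).ne
  have hin : ∀ k, (∑' j : ℤ, ENNReal.ofReal (F k j)) ≠ ⊤ := by
    intro k
    exact ((ENNReal.le_tsum k).trans_lt htot.lt_top).ne
  have hsum1 : ∀ k, Summable (F k) := by
    intro k
    have := ENNReal.summable_toReal (hin k)
    refine this.congr fun j => ?_
    rw [ENNReal.toReal_ofReal (hF k j)]
  have heq : ∀ k, ∑' j, F k j = (∑' j : ℤ, ENNReal.ofReal (F k j)).toReal := by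
    intro k
    rw [ENNReal.tsum_toReal_eq (fun j => ENNReal.ofReal_ne_top)]
    exact tsum_congr fun j => (ENNReal.toReal_ofReal (hF k j)).symm
  have hsum2 : Summable (fun k => ∑' j, F k j) := by
    have := ENNReal.summable_toReal htot
    refine this.congr fun k => (heq k).symm
  refine ⟨hsum1, hsum2, ?_⟩
  have : ∑' k : ℤ, ∑' j : ℤ, F k j = (∑' k : ℤ, ∑' j : ℤ, ENNReal.ofReal (F k j)).toReal := by
    rw [ENNReal.tsum_toReal_eq hin]
    exact tsum_congr fun k => heq k
  rw [this]
  exact ENNReal.toReal_mono hB h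

/-- Iterated summability and bound by a majorant. -/
lemma iter_bound {G m : ℤ → ℤ → ℝ} (hm : ∀ k j, |G k j| ≤ m k j)
    (h1 : ∀ k, Summable (m k)) (h2 : Summable fun k => ∑' j, m k j) :
    (∀ k, Summable (G k)) ∧ Summable (fun k => ∑' j, G k j) ∧
      |∑' k : ℤ, ∑' j : ℤ, G k j| ≤ ∑' k : ℤ, ∑' j : ℤ, m k j := by
  have hGk : ∀ k, Summable (G k) := by
    intro k
    refine Summable.of_abs (Summable.of_nonneg_of_le (fun j => abs_nonneg _) (hm k) (h1 k))
  have hinner : ∀ k, |∑' j, G k j| ≤ ∑' j, m k j := by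
    intro k
    calc |∑' j, G k j| ≤ ∑' j, |G k j| := abs_tsum_le' (hGk k).abs
      _ ≤ ∑' j, m k j := Summable.tsum_le_tsum (hm k) (hGk k).abs (h1 k)
  have hGo : Summable (fun k => ∑' j, G k j) := by
    refine Summable.of_abs (Summable.of_nonneg_of_le (fun k => abs_nonneg _) hinner h2)
  refine ⟨hGk, hGo, ?_⟩
  calc |∑' k, ∑' j, G k j| ≤ ∑' k, |∑' j, G k j| := abs_tsum_le' hGo.abs
    _ ≤ ∑' k, ∑' j, m k j := Summable.tsum_le_tsum hinner hGo.abs h2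



lemma pd20 (f : ℝ × ℝ → ℝ) : pd f 2 0 = pX (pX f) := rfl
lemma pd02 (f : ℝ × ℝ → ℝ) : pd f 0 2 = pY (pY f) := rfl
lemma pd11 (f : ℝ × ℝ → ℝ) : pd f 1 1 = pX (pY f) := rfl

lemma oneD_facts {g : ℝ → ℝ} (hg : ContDiff ℝ 2 g) :
    Differentiable ℝ g ∧ Differentiable ℝ (deriv g) := by
  rw [show (2 : WithTop ℕ∞) = 1 + 1 by norm_num, contDiff_succ_iff_deriv] at hg
  exact ⟨hg.1, (contDiff_one_iff_deriv.1 hg.2.2).1⟩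

lemma pY_eq {f : ℝ × ℝ → ℝ} (hf : ContDiff ℝ 2 f) (p : ℝ × ℝ) :
    pY f p = fderiv ℝ f p (0, 1) := by
  obtain ⟨a, b⟩ := p
  have hd : DifferentiableAt ℝ f (a, b) :=
    (hf.differentiable (by norm_num)) _
  have hline : HasDerivAt (fun t : ℝ => ((a, t) : ℝ × ℝ)) ((0 : ℝ), (1 : ℝ)) b :=
    (hasDerivAt_const b a).prodMk (hasDerivAt_id b)
  have := hd.hasFDerivAt.comp_hasDerivAt b hline
  exact this.deriv

lemma sectionY_contDiff {f : ℝ × ℝ → ℝ} (hf : ContDiff ℝ 2 f) (s : ℝ) :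
    ContDiff ℝ 2 (fun t => f (s, t)) := hf.comp (contDiff_const.prodMk contDiff_id)

lemma sectionX_contDiff {f : ℝ × ℝ → ℝ} (hf : ContDiff ℝ 2 f) (t : ℝ) :
    ContDiff ℝ 2 (fun s => f (s, t)) := hf.comp (contDiff_id.prodMk contDiff_const)

lemma derivY_eq {f : ℝ × ℝ → ℝ} (s : ℝ) : deriv (fun t => f (s, t)) = fun t => pY f (s, t) := rfl
lemma derivX_eq {f : ℝ × ℝ → ℝ} (t : ℝ) : deriv (fun s => f (s, t)) = fun s => pX f (s, t) := rfl


lemma taylor2 {f : ℝ × ℝ → ℝ} (hf : ContDiff ℝ 2 f) {C20 C11 C02 : ℝ}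
    (h20 : ∀ z, |pd f 2 0 z| ≤ C20) (h11 : ∀ z, |pd f 1 1 z| ≤ C11)
    (h02 : ∀ z, |pd f 0 2 z| ≤ C02) (x y s t : ℝ) :
    |f (s, t) - f (x, y) - pX f (x, y) * (s - x) - pY f (x, y) * (t - y)| ≤
      C20 * (s - x) ^ 2 + C11 * (|s - x| * |t - y|) + C02 * (t - y) ^ 2 := by
  obtain ⟨hgd, hgd'⟩ := oneD_facts (sectionY_contDiff hf s)
  have hbA : ∀ t', |deriv (deriv (fun t' => f (s, t'))) t'| ≤ C02 := by
    intro t'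
    rw [derivY_eq]
    exact (h02 (s, t'))
  have hA := taylor1 hgd hgd' hbA y t
  rw [derivY_eq (f := f) s] at hA
  obtain ⟨hkd, hkd'⟩ := oneD_facts (sectionX_contDiff hf y)
  have hbC : ∀ s', |deriv (deriv (fun s' => f (s', y))) s'| ≤ C20 := by
    intro s'
    rw [derivX_eq]
    exact (h20 (s', y))
  have hC := taylor1 hkd hkd' hbC x s
  rw [derivX_eq (f := f) y] at hC
  have hψ : ContDiff ℝ 1 (fun p : ℝ × ℝ => fderiv ℝ f p ((0 : ℝ), (1 : ℝ))) :=
    ContDiff.clm_apply (hf.fderiv_right (by norm_num)) contDiff_const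
  have hφeq : (fun s' => pY f (s', y)) =
      (fun p : ℝ × ℝ => fderiv ℝ f p ((0 : ℝ), (1 : ℝ))) ∘ (fun s' : ℝ => (s', y)) := by
    funext s'
    exact pY_eq hf (s', y)
  have hφd : Differentiable ℝ (fun s' => pY f (s', y)) := by
    rw [hφeq]
    exact (hψ.differentiable one_ne_zero).comp (differentiable_id.prodMk (differentiable_const y))
  have hbB : ∀ s', |deriv (fun s' => pY f (s', y)) s'| ≤ C11 := by
    intro s'
    exact h11 (s', y)
  have hB := lip1 hφd hbB x s
  have key : f (s, t) - f (x, y) - pX f (x, y) * (s - x) - pY f (x, y) * (t - y)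
      = (f (s, t) - f (s, y) - pY f (s, y) * (t - y))
        + (pY f (s, y) - pY f (x, y)) * (t - y)
        + (f (s, y) - f (x, y) - pX f (x, y) * (s - x)) := by ring
  rw [key]
  have hBB : |(pY f (s, y) - pY f (x, y)) * (t - y)| ≤ C11 * (|s - x| * |t - y|) := by
    rw [abs_mul]
    calc |pY f (s, y) - pY f (x, y)| * |t - y| ≤ (C11 * |s - x|) * |t - y| :=
          mul_le_mul_of_nonneg_right hB (abs_nonneg _)
      _ = C11 * (|s - x| * |t - y|) := by ring
  calc |_ + _ + _| ≤ |f (s, t) - f (s, y) - pY f (s, y) * (t - y)|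
        + |(pY f (s, y) - pY f (x, y)) * (t - y)|
        + |f (s, y) - f (x, y) - pX f (x, y) * (s - x)| := abs_add_three _ _ _
    _ ≤ C02 * (t - y) ^ 2 + C11 * (|s - x| * |t - y|) + C20 * (s - x) ^ 2 := by
        gcongr
    _ = C20 * (s - x) ^ 2 + C11 * (|s - x| * |t - y|) + C02 * (t - y) ^ 2 := by ring

section helpers

lemma summable_of_bound {g h : ℤ → ℝ} (hh : Summable h) (hb : ∀ j, |g j| ≤ h j) :
    Summable g :=
  Summable.of_abs (Summable.of_nonneg_of_le (fun _ => abs_nonneg _) hb hh)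

def IterSummable (h : ℤ → ℤ → ℝ) : Prop :=
  (∀ k, Summable (h k)) ∧ Summable (fun k => ∑' j, h k j)

lemma IterSummable.add {h1 h2 : ℤ → ℤ → ℝ} (p1 : IterSummable h1) (p2 : IterSummable h2) :
    IterSummable (fun k j => h1 k j + h2 k j) ∧
      (∑' k : ℤ, ∑' j : ℤ, (h1 k j + h2 k j)) =
        (∑' k : ℤ, ∑' j : ℤ, h1 k j) + (∑' k : ℤ, ∑' j : ℤ, h2 k j) := by
  have hin : ∀ k, Summable (fun j => h1 k j + h2 k j) := fun k => (p1.1 k).add (p2.1 k)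
  have heq : ∀ k, ∑' j, (h1 k j + h2 k j) = (∑' j, h1 k j) + (∑' j, h2 k j) :=
    fun k => Summable.tsum_add (p1.1 k) (p2.1 k)
  have hout : Summable (fun k => ∑' j, (h1 k j + h2 k j)) :=
    (p1.2.add p2.2).congr fun k => (heq k).symm
  refine ⟨⟨hin, hout⟩, ?_⟩
  rw [tsum_congr heq, Summable.tsum_add p1.2 p2.2]

lemma IterSummable.mulc {h : ℤ → ℤ → ℝ} (c : ℝ) (p : IterSummable h) :
    IterSummable (fun k j => h k j * c) ∧
      (∑' k : ℤ, ∑' j : ℤ, h k j * c) = (∑' k : ℤ, ∑' j : ℤ, h k j) * c := by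
  have hin : ∀ k, Summable (fun j => h k j * c) := fun k => (p.1 k).mul_right c
  have heq : ∀ k, ∑' j, h k j * c = (∑' j, h k j) * c := fun k => tsum_mul_right
  have hout : Summable (fun k => ∑' j, h k j * c) :=
    (p.2.mul_right c).congr fun k => (heq k).symm
  refine ⟨⟨hin, hout⟩, ?_⟩
  rw [tsum_congr heq, tsum_mul_right]

lemma e_summable (u : ℝ) :
    Summable (fun k : ℤ => if |u - (k : ℝ)| < 1 then (1 : ℝ) else 0) := by
  apply summable_of_ne_finset_zero (s := Finset.Icc (⌈u⌉ - 1) (⌊u⌋ + 1))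
  intro k hk
  rw [if_neg]
  intro h
  apply hk
  rw [Finset.mem_Icc]
  obtain ⟨h1, h2⟩ := abs_lt.1 h
  constructor
  · have : ⌈u⌉ ≤ k + 1 := Int.ceil_le.2 (by push_cast; linarith)
    omega
  · have : k - 1 ≤ ⌊u⌋ := Int.le_floor.2 (by push_cast; linarith)
    omega

/-- iterated summability of `|χ(u-k, v-j)|` from that of the second-order weights. -/
lemma chi_iter_summable {χ : ℝ × ℝ → ℝ} {Cχ : ℝ} (hCχ : ∀ p, |χ p| ≤ Cχ) (u v : ℝ)
    (p20 : IterSummable (fun k j : ℤ =>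
      |χ (u - (k : ℝ), v - (j : ℝ))| * |u - (k : ℝ)| ^ 2 * |v - (j : ℝ)| ^ 0))
    (p02 : IterSummable (fun k j : ℤ =>
      |χ (u - (k : ℝ), v - (j : ℝ))| * |u - (k : ℝ)| ^ 0 * |v - (j : ℝ)| ^ 2)) :
    IterSummable (fun k j : ℤ => |χ (u - (k : ℝ), v - (j : ℝ))|) := by
  have hCχ0 : 0 ≤ Cχ := le_trans (abs_nonneg _) (hCχ (0, 0))
  set e : ℤ → ℝ := fun k => if |u - (k : ℝ)| < 1 then (1 : ℝ) else 0 with he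
  set e' : ℤ → ℝ := fun j => if |v - (j : ℝ)| < 1 then (1 : ℝ) else 0 with he'
  set m : ℤ → ℤ → ℝ := fun k j =>
    |χ (u - (k : ℝ), v - (j : ℝ))| * |u - (k : ℝ)| ^ 2 * |v - (j : ℝ)| ^ 0
    + |χ (u - (k : ℝ), v - (j : ℝ))| * |u - (k : ℝ)| ^ 0 * |v - (j : ℝ)| ^ 2
    + Cχ * (e k * e' j) with hm
  have hmi : ∀ k, Summable (m k) := by
    intro k
    exact ((p20.1 k).add (p02.1 k)).add (((e_summable v).mul_left (e k)).mul_left Cχ)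
  have hmeq : ∀ k, ∑' j, m k j =
      (∑' j : ℤ, |χ (u - (k : ℝ), v - (j : ℝ))| * |u - (k : ℝ)| ^ 2 * |v - (j : ℝ)| ^ 0)
      + (∑' j : ℤ, |χ (u - (k : ℝ), v - (j : ℝ))| * |u - (k : ℝ)| ^ 0 * |v - (j : ℝ)| ^ 2)
      + Cχ * e k * (∑' j : ℤ, e' j) := by
    intro k
    rw [hm]
    rw [Summable.tsum_add ((p20.1 k).add (p02.1 k))
      (((e_summable v).mul_left (e k)).mul_left Cχ), Summable.tsum_add (p20.1 k) (p02.1 k)]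
    congr 1
    rw [show (fun j : ℤ => Cχ * (e k * e' j)) = fun j : ℤ => (Cχ * e k) * e' j by funext j; ring,
      tsum_mul_left]
  have hmo : Summable (fun k => ∑' j, m k j) := by
    refine Summable.congr ?_ (fun k => (hmeq k).symm)
    exact (p20.2.add p02.2).add (((e_summable u).mul_left (Cχ * ∑' j : ℤ, e' j)).congr
      (fun k => by ring))
  have hle : ∀ k j : ℤ, |(|χ (u - (k : ℝ), v - (j : ℝ))|)| ≤ m k j := by
    intro k j
    rw [abs_abs, hm]
    simp only [pow_zero, pow_one, mul_one]
    have h0 : (0:ℝ) ≤ |χ (u - (k : ℝ), v - (j : ℝ))| := abs_nonneg _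
    rcases le_or_gt 1 |u - (k : ℝ)| with h1 | h1
    · have : (1:ℝ) ≤ |u - (k : ℝ)| ^ 2 := by nlinarith
      have he0 : 0 ≤ e k * e' j := by
        rw [he, he']; positivity
      nlinarith [sq_nonneg (v - (j:ℝ)), abs_nonneg (v - (j:ℝ)), sq_abs (v - (j:ℝ))]
    · rcases le_or_gt 1 |v - (j : ℝ)| with h2 | h2
      · have : (1:ℝ) ≤ |v - (j : ℝ)| ^ 2 := by nlinarith
        have he0 : 0 ≤ e k * e' j := by rw [he, he']; positivity
        nlinarith [sq_nonneg (u - (k:ℝ)), abs_nonneg (u - (k:ℝ))]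
      · have hek : e k = 1 := by rw [he]; simp [h1]
        have hej : e' j = 1 := by rw [he']; simp [h2]
        rw [hek, hej]
        have := hCχ (u - (k : ℝ), v - (j : ℝ))
        nlinarith [abs_nonneg (u - (k:ℝ)), abs_nonneg (v - (j:ℝ)), sq_nonneg (u - (k:ℝ)), sq_nonneg (v - (j:ℝ))]
  obtain ⟨hi, ho, _⟩ := iter_bound hle hmi hmo
  exact ⟨hi, ho⟩

end helpers


lemma moment_extract (χ : ℝ × ℝ → ℝ) (hM2 : Mmoment χ 2 < ⊤) (p q : ℕ) (hpq : p + q = 2)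
    (u v : ℝ) :
    IterSummable (fun k j : ℤ =>
        |χ (u - (k : ℝ), v - (j : ℝ))| * |u - (k : ℝ)| ^ p * |v - (j : ℝ)| ^ q) ∧
      (∑' k : ℤ, ∑' j : ℤ,
        |χ (u - (k : ℝ), v - (j : ℝ))| * |u - (k : ℝ)| ^ p * |v - (j : ℝ)| ^ q) ≤
        (absMoment χ p q).toReal := by
  have hfin : absMoment χ p q ≠ ⊤ := by
    have : absMoment χ p q ≤ Mmoment χ 2 :=
      le_iSup (fun pp : {p : ℕ × ℕ // p.1 + p.2 = 2} => absMoment χ pp.1.1 pp.1.2)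
        ⟨(p, q), hpq⟩
    exact (lt_of_le_of_lt this hM2).ne
  have hle : (∑' k : ℤ, ∑' j : ℤ, ENNReal.ofReal
      (|χ (u - (k : ℝ), v - (j : ℝ))| * |u - (k : ℝ)| ^ p * |v - (j : ℝ)| ^ q)) ≤
      absMoment χ p q := by
    calc (∑' k : ℤ, ∑' j : ℤ, ENNReal.ofReal
        (|χ (u - (k : ℝ), v - (j : ℝ))| * |u - (k : ℝ)| ^ p * |v - (j : ℝ)| ^ q))
        ≤ ⨆ v' : ℝ, ∑' k : ℤ, ∑' j : ℤ, ENNReal.ofReal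
          (|χ (u - (k : ℝ), v' - (j : ℝ))| * |u - (k : ℝ)| ^ p * |v' - (j : ℝ)| ^ q) :=
          le_iSup (fun v' : ℝ => ∑' k : ℤ, ∑' j : ℤ, ENNReal.ofReal
            (|χ (u - (k : ℝ), v' - (j : ℝ))| * |u - (k : ℝ)| ^ p * |v' - (j : ℝ)| ^ q)) v
      _ ≤ absMoment χ p q :=
          le_iSup (fun u' : ℝ => ⨆ v' : ℝ, ∑' k : ℤ, ∑' j : ℤ, ENNReal.ofReal
            (|χ (u' - (k : ℝ), v' - (j : ℝ))| * |u' - (k : ℝ)| ^ p * |v' - (j : ℝ)| ^ q)) u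
  obtain ⟨h1, h2, h3⟩ := summable_of_ennreal (fun k j => by positivity) hfin hle
  exact ⟨⟨h1, h2⟩, h3⟩



lemma key_bound (χ : ℝ × ℝ → ℝ) {Cχ : ℝ} (hCχ : ∀ p, |χ p| ≤ Cχ)
    (hpart : PartitionOfUnity2 χ) (c : ℝ) (hM2 : Mmoment χ 2 < ⊤)
    (hmom : MomentCondition χ 2 c) (f : ℝ × ℝ → ℝ) (hf : ContDiff ℝ 2 f)
    {C00 C20 C11 C02 : ℝ}
    (h00 : ∀ z, |f z| ≤ C00) (h20 : ∀ z, |pd f 2 0 z| ≤ C20)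
    (h11 : ∀ z, |pd f 1 1 z| ≤ C11) (h02 : ∀ z, |pd f 0 2 z| ≤ C02)
    (w : ℝ) (hw : 0 < w) (x y : ℝ) :
    |Gop χ w f x y - f (x, y)| ≤
      (C20 * (absMoment χ 2 0).toReal + C11 * (absMoment χ 1 1).toReal
        + C02 * (absMoment χ 0 2).toReal) / w ^ 2 := by
  have hC20n : 0 ≤ C20 := le_trans (abs_nonneg _) (h20 (0, 0))
  have hC11n : 0 ≤ C11 := le_trans (abs_nonneg _) (h11 (0, 0))
  have hC02n : 0 ≤ C02 := le_trans (abs_nonneg _) (h02 (0, 0))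
  unfold Gop
  set u := w * x with hu
  set v := w * y with hv
  obtain ⟨P20, S20b⟩ := moment_extract χ hM2 2 0 rfl u v
  obtain ⟨P11, S11b⟩ := moment_extract χ hM2 1 1 rfl u v
  obtain ⟨P02, S02b⟩ := moment_extract χ hM2 0 2 rfl u v
  have P0 := chi_iter_summable hCχ u v P20 P02
  -- the four families
  set G₁ : ℤ → ℤ → ℝ := fun k j =>
    χ (u - (k : ℝ), v - (j : ℝ)) * f ((k : ℝ) / w, (j : ℝ) / w) with hG₁
  set G₂ : ℤ → ℤ → ℝ := fun k j => χ (u - (k : ℝ), v - (j : ℝ)) * f (x, y) with hG₂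
  set G₃ : ℤ → ℤ → ℝ := fun k j =>
    χ (u - (k : ℝ), v - (j : ℝ)) * (u - (k : ℝ)) ^ 1 * (v - (j : ℝ)) ^ 0
      * (pX f (x, y) / w) with hG₃
  set G₄ : ℤ → ℤ → ℝ := fun k j =>
    χ (u - (k : ℝ), v - (j : ℝ)) * (u - (k : ℝ)) ^ 0 * (v - (j : ℝ)) ^ 1
      * (pY f (x, y) / w) with hG₄
  -- majorants and iterated summability
  have pm1 := (IterSummable.mulc C00 P0).1
  have hm1 : ∀ k j : ℤ, |G₁ k j| ≤ |χ (u - (k : ℝ), v - (j : ℝ))| * C00 := by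
    intro k j
    rw [hG₁]
    rw [abs_mul]
    exact mul_le_mul_of_nonneg_left (h00 _) (abs_nonneg _)
  have hm2' : ∀ k j : ℤ, |G₂ k j| ≤ |χ (u - (k : ℝ), v - (j : ℝ))| * C00 := by
    intro k j
    rw [hG₂, abs_mul]
    exact mul_le_mul_of_nonneg_left (h00 _) (abs_nonneg _)
  obtain ⟨S1i, O1, _⟩ := iter_bound hm1 pm1.1 pm1.2
  obtain ⟨S2i, O2, _⟩ := iter_bound hm2' pm1.1 pm1.2
  -- G₃ majorant
  have pm3 := (IterSummable.mulc (|pX f (x, y) / w|)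
    ((IterSummable.add P20 P0).1)).1
  have hm3 : ∀ k j : ℤ, |G₃ k j| ≤
      (|χ (u - (k : ℝ), v - (j : ℝ))| * |u - (k : ℝ)| ^ 2 * |v - (j : ℝ)| ^ 0
        + |χ (u - (k : ℝ), v - (j : ℝ))|) * |pX f (x, y) / w| := by
    intro k j
    rw [hG₃, abs_mul]
    apply mul_le_mul_of_nonneg_right _ (abs_nonneg _)
    rw [abs_mul, abs_mul, abs_pow, abs_pow]
    simp only [pow_zero, pow_one, mul_one]
    nlinarith [abs_nonneg (χ (u - (k : ℝ), v - (j : ℝ))), abs_nonneg (u - (k : ℝ)),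
      sq_nonneg (|u - (k : ℝ)| - 1),
      mul_nonneg (abs_nonneg (χ (u - (k : ℝ), v - (j : ℝ)))) (sq_nonneg (|u - (k:ℝ)| - 1))]
  obtain ⟨S3i, O3, _⟩ := iter_bound hm3 pm3.1 pm3.2
  have pm4 := (IterSummable.mulc (|pY f (x, y) / w|)
    ((IterSummable.add P02 P0).1)).1
  have hm4 : ∀ k j : ℤ, |G₄ k j| ≤
      (|χ (u - (k : ℝ), v - (j : ℝ))| * |u - (k : ℝ)| ^ 0 * |v - (j : ℝ)| ^ 2
        + |χ (u - (k : ℝ), v - (j : ℝ))|) * |pY f (x, y) / w| := by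
    intro k j
    rw [hG₄, abs_mul]
    apply mul_le_mul_of_nonneg_right _ (abs_nonneg _)
    rw [abs_mul, abs_mul, abs_pow, abs_pow]
    simp only [pow_zero, pow_one, one_mul, mul_one]
    nlinarith [abs_nonneg (χ (u - (k : ℝ), v - (j : ℝ))), abs_nonneg (v - (j : ℝ)),
      mul_nonneg (abs_nonneg (χ (u - (k : ℝ), v - (j : ℝ)))) (sq_nonneg (|v - (j:ℝ)| - 1))]
  obtain ⟨S4i, O4, _⟩ := iter_bound hm4 pm4.1 pm4.2
  -- values of the simple series
  have hG2v : (∑' k : ℤ, ∑' j : ℤ, G₂ k j) = f (x, y) := by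
    rw [hG₂]
    calc (∑' k : ℤ, ∑' j : ℤ, χ (u - (k : ℝ), v - (j : ℝ)) * f (x, y))
        = ∑' k : ℤ, (∑' j : ℤ, χ (u - (k : ℝ), v - (j : ℝ))) * f (x, y) :=
          tsum_congr fun k => tsum_mul_right
      _ = (∑' k : ℤ, ∑' j : ℤ, χ (u - (k : ℝ), v - (j : ℝ))) * f (x, y) := tsum_mul_right
      _ = 1 * f (x, y) := by rw [hpart u v]
      _ = f (x, y) := one_mul _
  have hG3v : (∑' k : ℤ, ∑' j : ℤ, G₃ k j) = 0 := by
    rw [hG₃]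
    calc (∑' k : ℤ, ∑' j : ℤ, χ (u - (k : ℝ), v - (j : ℝ)) * (u - (k : ℝ)) ^ 1
          * (v - (j : ℝ)) ^ 0 * (pX f (x, y) / w))
        = ∑' k : ℤ, (∑' j : ℤ, χ (u - (k : ℝ), v - (j : ℝ)) * (u - (k : ℝ)) ^ 1
          * (v - (j : ℝ)) ^ 0) * (pX f (x, y) / w) := tsum_congr fun k => tsum_mul_right
      _ = (∑' k : ℤ, ∑' j : ℤ, χ (u - (k : ℝ), v - (j : ℝ)) * (u - (k : ℝ)) ^ 1
          * (v - (j : ℝ)) ^ 0) * (pX f (x, y) / w) := tsum_mul_right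
      _ = 0 * (pX f (x, y) / w) := by rw [hmom.1 u v 1 0 (by norm_num) (by norm_num)]
      _ = 0 := zero_mul _
  have hG4v : (∑' k : ℤ, ∑' j : ℤ, G₄ k j) = 0 := by
    rw [hG₄]
    calc (∑' k : ℤ, ∑' j : ℤ, χ (u - (k : ℝ), v - (j : ℝ)) * (u - (k : ℝ)) ^ 0
          * (v - (j : ℝ)) ^ 1 * (pY f (x, y) / w))
        = ∑' k : ℤ, (∑' j : ℤ, χ (u - (k : ℝ), v - (j : ℝ)) * (u - (k : ℝ)) ^ 0
          * (v - (j : ℝ)) ^ 1) * (pY f (x, y) / w) := tsum_congr fun k => tsum_mul_right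
      _ = (∑' k : ℤ, ∑' j : ℤ, χ (u - (k : ℝ), v - (j : ℝ)) * (u - (k : ℝ)) ^ 0
          * (v - (j : ℝ)) ^ 1) * (pY f (x, y) / w) := tsum_mul_right
      _ = 0 * (pY f (x, y) / w) := by rw [hmom.1 u v 0 1 (by norm_num) (by norm_num)]
      _ = 0 := zero_mul _
  -- splitting
  have step_in : ∀ k : ℤ, (∑' j : ℤ, (G₁ k j - G₂ k j + G₃ k j + G₄ k j)) =
      (∑' j : ℤ, G₁ k j) - (∑' j : ℤ, G₂ k j) + (∑' j : ℤ, G₃ k j) + (∑' j : ℤ, G₄ k j) := by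
    intro k
    rw [Summable.tsum_add (((S1i k).sub (S2i k)).add (S3i k)) (S4i k),
      Summable.tsum_add ((S1i k).sub (S2i k)) (S3i k), Summable.tsum_sub (S1i k) (S2i k)]
  have hsplit : (∑' k : ℤ, ∑' j : ℤ, (G₁ k j - G₂ k j + G₃ k j + G₄ k j)) =
      (∑' k : ℤ, ∑' j : ℤ, G₁ k j) - (∑' k : ℤ, ∑' j : ℤ, G₂ k j)
      + (∑' k : ℤ, ∑' j : ℤ, G₃ k j) + (∑' k : ℤ, ∑' j : ℤ, G₄ k j) := by
    calc (∑' k : ℤ, ∑' j : ℤ, (G₁ k j - G₂ k j + G₃ k j + G₄ k j))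
        = ∑' k : ℤ, ((∑' j : ℤ, G₁ k j) - (∑' j : ℤ, G₂ k j) + (∑' j : ℤ, G₃ k j)
          + (∑' j : ℤ, G₄ k j)) := tsum_congr step_in
      _ = _ := by
          rw [Summable.tsum_add (((O1).sub O2).add O3) O4, Summable.tsum_add ((O1).sub O2) O3, Summable.tsum_sub O1 O2]
  have hrw : (∑' k : ℤ, ∑' j : ℤ, G₁ k j) - f (x, y) =
      ∑' k : ℤ, ∑' j : ℤ, (G₁ k j - G₂ k j + G₃ k j + G₄ k j) := by
    rw [hsplit, hG2v, hG3v, hG4v]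
    ring
  rw [hrw]
  -- final majorant
  have pm20 := IterSummable.mulc (C20 / w ^ 2) P20
  have pm11 := IterSummable.mulc (C11 / w ^ 2) P11
  have pm02 := IterSummable.mulc (C02 / w ^ 2) P02
  have pm12 := IterSummable.add pm20.1 pm11.1
  have pmT := IterSummable.add pm12.1 pm02.1
  -- pointwise bound via Taylor
  have habs1 : ∀ k : ℤ, |(k : ℝ) / w - x| = |u - (k : ℝ)| / w := by
    intro k
    rw [hu]
    rw [show (k : ℝ) / w - x = (((k : ℝ)) - w * x) / w by field_simp,
      abs_div, abs_of_pos hw, abs_sub_comm]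
  have habs2 : ∀ j : ℤ, |(j : ℝ) / w - y| = |v - (j : ℝ)| / w := by
    intro j
    rw [hv]
    rw [show (j : ℝ) / w - y = (((j : ℝ)) - w * y) / w by field_simp,
      abs_div, abs_of_pos hw, abs_sub_comm]
  have hmT : ∀ k j : ℤ, |G₁ k j - G₂ k j + G₃ k j + G₄ k j| ≤
      (|χ (u - (k : ℝ), v - (j : ℝ))| * |u - (k : ℝ)| ^ 2 * |v - (j : ℝ)| ^ 0) * (C20 / w ^ 2)
      + (|χ (u - (k : ℝ), v - (j : ℝ))| * |u - (k : ℝ)| ^ 1 * |v - (j : ℝ)| ^ 1) * (C11 / w ^ 2)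
      + (|χ (u - (k : ℝ), v - (j : ℝ))| * |u - (k : ℝ)| ^ 0 * |v - (j : ℝ)| ^ 2)
        * (C02 / w ^ 2) := by
    intro k j
    have hT := taylor2 hf h20 h11 h02 x y ((k : ℝ) / w) ((j : ℝ) / w)
    have hGR : G₁ k j - G₂ k j + G₃ k j + G₄ k j =
        χ (u - (k : ℝ), v - (j : ℝ)) *
          (f ((k : ℝ) / w, (j : ℝ) / w) - f (x, y) - pX f (x, y) * ((k : ℝ) / w - x)
            - pY f (x, y) * ((j : ℝ) / w - y)) := by
      rw [hG₁, hG₂, hG₃, hG₄, hu, hv]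
      field_simp
      ring
    calc |G₁ k j - G₂ k j + G₃ k j + G₄ k j|
        = |χ (u - (k : ℝ), v - (j : ℝ))| *
          |f ((k : ℝ) / w, (j : ℝ) / w) - f (x, y) - pX f (x, y) * ((k : ℝ) / w - x)
            - pY f (x, y) * ((j : ℝ) / w - y)| := by rw [hGR, abs_mul]
      _ ≤ |χ (u - (k : ℝ), v - (j : ℝ))| *
          (C20 * ((k : ℝ) / w - x) ^ 2 + C11 * (|(k : ℝ) / w - x| * |(j : ℝ) / w - y|)
            + C02 * ((j : ℝ) / w - y) ^ 2) :=
          mul_le_mul_of_nonneg_left hT (abs_nonneg _)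
      _ = _ := by
          rw [← sq_abs ((k : ℝ) / w - x), ← sq_abs ((j : ℝ) / w - y), habs1 k, habs2 j]
          simp only [pow_zero, pow_one, mul_one, one_mul]
          field_simp
  obtain ⟨_, _, hfinal⟩ := iter_bound hmT pmT.1.1 pmT.1.2
  refine le_trans hfinal ?_
  rw [pmT.2, pm12.2, pm20.2, pm11.2, pm02.2]
  have hb : (∑' (k : ℤ), ∑' (j : ℤ),
        |χ (u - (k:ℝ), v - (j:ℝ))| * |u - (k:ℝ)| ^ 2 * |v - (j:ℝ)| ^ 0) * (C20 / w ^ 2)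
      + (∑' (k : ℤ), ∑' (j : ℤ),
        |χ (u - (k:ℝ), v - (j:ℝ))| * |u - (k:ℝ)| ^ 1 * |v - (j:ℝ)| ^ 1) * (C11 / w ^ 2)
      + (∑' (k : ℤ), ∑' (j : ℤ),
        |χ (u - (k:ℝ), v - (j:ℝ))| * |u - (k:ℝ)| ^ 0 * |v - (j:ℝ)| ^ 2) * (C02 / w ^ 2)
      ≤ (absMoment χ 2 0).toReal * (C20 / w ^ 2) + (absMoment χ 1 1).toReal * (C11 / w ^ 2)
        + (absMoment χ 0 2).toReal * (C02 / w ^ 2) := by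
    gcongr <;> positivity
  refine le_trans hb (le_of_eq ?_)
  field_simp
/-- ‖G_w f − f‖_∞ = O(w⁻²) as w → ∞, so in particular
w·(G_w f − f) → 0 uniformly. -/
theorem statement15 (χ : ℝ × ℝ → ℝ) (hχc : Continuous χ) (hχb : ∃ C : ℝ, ∀ p, |χ p| ≤ C)
    (hpart : PartitionOfUnity2 χ)
    (c : ℝ) (hM2 : Mmoment χ 2 < ⊤) (hmom : MomentCondition χ 2 c)
    (f : ℝ × ℝ → ℝ) (hf : ContDiff ℝ 2 f)
    (hbd : ∀ i j : ℕ, i + j ≤ 2 → ∃ C : ℝ, ∀ z, |pd f i j z| ≤ C) :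
    (∃ C : ℝ, ∀ w : ℝ, 0 < w → ∀ x y : ℝ,
      |Gop χ w f x y - f (x, y)| ≤ C / w ^ 2) ∧
    Tendsto (fun w : ℝ => ⨆ p : ℝ × ℝ, |w * (Gop χ w f p.1 p.2 - f p)|)
      atTop (nhds 0) := by
  obtain ⟨Cχ, hCχ⟩ := hχb
  obtain ⟨C00, h00⟩ := hbd 0 0 (by norm_num)
  have h00' : ∀ z, |f z| ≤ C00 := h00
  obtain ⟨C20, h20⟩ := hbd 2 0 (by norm_num)
  obtain ⟨C11, h11⟩ := hbd 1 1 (by norm_num)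
  obtain ⟨C02, h02⟩ := hbd 0 2 (by norm_num)
  set CC := C20 * (absMoment χ 2 0).toReal + C11 * (absMoment χ 1 1).toReal
    + C02 * (absMoment χ 0 2).toReal with hCC
  have key := key_bound χ hCχ hpart c hM2 hmom f hf h00' h20 h11 h02
  refine ⟨⟨CC, fun w hw x y => key w hw x y⟩, ?_⟩
  have hlim : Tendsto (fun w : ℝ => CC / w) atTop (nhds 0) := by
    simpa [div_eq_mul_inv] using tendsto_inv_atTop_zero.const_mul CC
  refine tendsto_of_tendsto_of_tendsto_of_le_of_le' tendsto_const_nhds hlim ?_ ?_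
  · filter_upwards with w
    exact Real.iSup_nonneg fun p => abs_nonneg _
  · filter_upwards [eventually_ge_atTop (1 : ℝ)] with w hw1
    have hw : 0 < w := lt_of_lt_of_le one_pos hw1
    refine ciSup_le ?_
    rintro ⟨px, py⟩
    have hk := key w hw px py
    calc |w * (Gop χ w f px py - f (px, py))|
        = w * |Gop χ w f px py - f (px, py)| := by rw [abs_mul, abs_of_pos hw]
      _ ≤ w * (CC / w ^ 2) := mul_le_mul_of_nonneg_left hk (le_of_lt hw)
      _ = CC / w := by field_simp
end
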